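/- Let k ≥ 3 be an integer and let G be a finite connected (k+1)-colorable graph that has a universal vertex. Let G* be the graph obtained from G by attaching to each vertex a of G a private copy of the gadget G_k, identifying a with the vertex u of that copy. Then χ(G) ≤ k if and only if χ_c(G*) = k + 1. -/

import Mathlib

open SimpleGraph

/-- One step of the greedy coloring algorithm: color the vertex `w` with the smallest
positive integer not already used on one of its (already colored) neighbours.
Color `0` means "not yet colored". -/
noncomputable def greedyStep {V : Type*} [DecidableEq V] (G : SimpleGraph V)
    (f : V → ℕ) (w : V) : V → ℕ :=
  Function.update f w (sInf {n : ℕ | 0 < n ∧ ∀ z, G.Adj w z → f z ≠ n})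

/-- The coloring obtained by greedily coloring the vertices of the list `l` in order,
starting from the partial coloring `f₀`. -/
noncomputable def greedyFrom {V : Type*} [DecidableEq V] (G : SimpleGraph V)
    (f₀ : V → ℕ) (l : List V) : V → ℕ :=
  l.foldl (greedyStep G) f₀

/-- The greedy coloring of the ordering `l` (all vertices initially uncolored). -/
noncomputable def greedy {V : Type*} [DecidableEq V] (G : SimpleGraph V)
    (l : List V) : V → ℕ :=
  greedyFrom G (fun _ => 0) l

/-- `l` is a connected ordering of the vertices of `G`: it lists every vertex exactly once,
and every vertex other than the first has a neighbour occurring earlier in the list. -/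
def IsConnectedOrder {V : Type*} (G : SimpleGraph V) (l : List V) : Prop :=
  l.Nodup ∧ (∀ w : V, w ∈ l) ∧
    ∀ i : Fin l.length, 0 < (i : ℕ) →
      ∃ j : Fin l.length, (j : ℕ) < (i : ℕ) ∧ G.Adj (l.get i) (l.get j)

/-- `f` is a connected greedy coloring (CGC) of `G`. -/
def IsCGC {V : Type*} [DecidableEq V] (G : SimpleGraph V) (f : V → ℕ) : Prop :=
  ∃ l : List V, IsConnectedOrder G l ∧ f = greedy G l

/-- `f` is an `(x, α)`-connected greedy coloring of `G`: it is obtained from a connected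
ordering starting at `x` by coloring `x` with `α` and then coloring each subsequent
vertex with the smallest positive integer not appearing on its already-colored
neighbours. -/
def IsCGCFrom {V : Type*} [DecidableEq V] (G : SimpleGraph V) (x : V) (α : ℕ)
    (f : V → ℕ) : Prop :=
  ∃ l : List V, IsConnectedOrder G (x :: l) ∧
    f = greedyFrom G (Function.update (fun _ => 0) x α) l

/-- `f` uses exactly `k` colors. -/
def UsesColors {V : Type*} (f : V → ℕ) (k : ℕ) : Prop :=
  ∃ s : Finset ℕ, (∀ w, f w ∈ s) ∧ (∀ c ∈ s, ∃ w, f w = c) ∧ s.card = k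

/-- The connected chromatic number of `G`: the least `k` such that some connected greedy
coloring of `G` only uses colors in `{1, …, k}`. -/
noncomputable def connChrom {V : Type*} [DecidableEq V] (G : SimpleGraph V) : ℕ :=
  sInf {k | ∃ f, IsCGC G f ∧ ∀ w, f w ≤ k}

/-- The vertices of the gadget `G_k`: three cliques `U`, `W` (called `V` in the paper)
and `M` of size `k` each (the distinguished vertex `w` of `M` is `M i` with `i.val = 0`),
together with four special vertices `u, u', v, v'`. -/
inductive GkVert (k : ℕ) where
  | U : Fin k → GkVert k
  | W : Fin k → GkVert k
  | M : Fin k → GkVert k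
  | u : GkVert k
  | u' : GkVert k
  | v : GkVert k
  | v' : GkVert k
deriving DecidableEq

/-- The gadget `G_k`: `U`, `W` and `M` are cliques, `u` and `u'` are complete to `U`,
`v` and `v'` are complete to `W`, `u` and `v` are complete to `M ∖ {w}`, and
`u'` and `v'` are adjacent to `w` (where `w` is the vertex `M i` with `i.val = 0`). -/
def Gk (k : ℕ) : SimpleGraph (GkVert k) :=
  SimpleGraph.fromRel (fun a b =>
    (∃ i j, a = GkVert.U i ∧ b = GkVert.U j) ∨
    (∃ i j, a = GkVert.W i ∧ b = GkVert.W j) ∨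
    (∃ i j, a = GkVert.M i ∧ b = GkVert.M j) ∨
    (∃ i, a = GkVert.u ∧ b = GkVert.U i) ∨
    (∃ i, a = GkVert.u' ∧ b = GkVert.U i) ∨
    (∃ i, a = GkVert.v ∧ b = GkVert.W i) ∨
    (∃ i, a = GkVert.v' ∧ b = GkVert.W i) ∨
    (∃ i : Fin k, i.val ≠ 0 ∧ a = GkVert.u ∧ b = GkVert.M i) ∨
    (∃ i : Fin k, i.val ≠ 0 ∧ a = GkVert.v ∧ b = GkVert.M i) ∨
    (∃ i : Fin k, i.val = 0 ∧ a = GkVert.u' ∧ b = GkVert.M i) ∨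
    (∃ i : Fin k, i.val = 0 ∧ a = GkVert.v' ∧ b = GkVert.M i))


/-- The vertices of the copy of the gadget `G_k` attached at the vertex `a` of `G`:
the vertex `u` of the gadget is identified with `a` itself, and the remaining gadget
vertices become private copies. -/
def gadgetEmb {V : Type*} [DecidableEq V] (k : ℕ) (a : V) :
    GkVert k → V ⊕ (V × {t : GkVert k // t ≠ GkVert.u}) :=
  fun t => if h : t = GkVert.u then Sum.inl a else Sum.inr (a, ⟨t, h⟩)

/-- The graph `G*` obtained from `G` by attaching to each vertex `a` of `G` a private
copy of the gadget `G_k`, identifying `a` with the vertex `u` of that copy. -/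
def Gstar {V : Type*} [DecidableEq V] (G : SimpleGraph V) (k : ℕ) :
    SimpleGraph (V ⊕ (V × {t : GkVert k // t ≠ GkVert.u})) :=
  SimpleGraph.fromRel (fun x y =>
    (∃ a b, x = Sum.inl a ∧ y = Sum.inl b ∧ G.Adj a b) ∨
    (∃ (a : V) (s t : GkVert k), (Gk k).Adj s t ∧ x = gadgetEmb k a s ∧ y = gadgetEmb k a t))

set_option linter.unusedSectionVars false

section GreedyLemmas
variable {V : Type*} [DecidableEq V] (G : SimpleGraph V)

lemma greedyFrom_nil (f : V → ℕ) : greedyFrom G f [] = f := rfl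

lemma greedyFrom_cons (f : V → ℕ) (w : V) (l : List V) :
    greedyFrom G f (w :: l) = greedyFrom G (greedyStep G f w) l := rfl

lemma greedyFrom_append (f : V → ℕ) (l1 l2 : List V) :
    greedyFrom G f (l1 ++ l2) = greedyFrom G (greedyFrom G f l1) l2 :=
  List.foldl_append

lemma greedyStep_apply_ne (f : V → ℕ) (w z : V) (h : z ≠ w) : greedyStep G f w z = f z :=
  Function.update_of_ne h _ _

lemma greedyStep_apply_self (f : V → ℕ) (w : V) :
    greedyStep G f w w = sInf {n : ℕ | 0 < n ∧ ∀ z, G.Adj w z → f z ≠ n} :=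
  Function.update_self _ _ _

lemma greedyFrom_of_not_mem (f : V → ℕ) (l : List V) (z : V) (h : z ∉ l) :
    greedyFrom G f l z = f z := by
  induction l generalizing f with
  | nil => rfl
  | cons a l ih =>
    simp only [List.mem_cons, not_or] at h
    rw [greedyFrom_cons, ih _ h.2, greedyStep_apply_ne _ _ _ _ h.1]

lemma not_mem_drop_of_mem_take {l : List V} (hnd : l.Nodup) {i : ℕ} {z : V}
    (hz : z ∈ l.take i) : z ∉ l.drop i := by
  have h := hnd
  rw [← List.take_append_drop i l, List.nodup_append] at h
  exact fun hzd => h.2.2 z hz z hzd rfl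

lemma greedyFrom_stable (f : V → ℕ) {l : List V} (hnd : l.Nodup) {i : ℕ} {z : V}
    (hz : z ∈ l.take i) : greedyFrom G f l z = greedyFrom G f (l.take i) z := by
  conv_lhs => rw [← List.take_append_drop i l]
  rw [greedyFrom_append]
  exact greedyFrom_of_not_mem _ _ _ _ (not_mem_drop_of_mem_take hnd hz)

lemma get_mem_take {l : List V} {i j : ℕ} (hi : i < l.length) (hij : i < j) :
    l.get ⟨i, hi⟩ ∈ l.take j := by
  rw [List.mem_take_iff_getElem]
  exact ⟨i, by omega, by simp⟩

lemma greedy_spec (f : V → ℕ) {l : List V} (hnd : l.Nodup) (i : ℕ) (hi : i < l.length) :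
    greedyFrom G f l (l.get ⟨i, hi⟩) =
      sInf {n : ℕ | 0 < n ∧ ∀ z, G.Adj (l.get ⟨i, hi⟩) z →
        greedyFrom G f (l.take i) z ≠ n} := by
  set w := l.get ⟨i, hi⟩ with hw
  have hsplit : l = l.take i ++ w :: l.drop (i + 1) := by
    conv_lhs => rw [← List.take_append_drop i l]
    congr 1
    rw [hw]
    exact (List.drop_eq_getElem_cons hi).symm ▸ rfl
  have hwmem : w ∈ l.take (i+1) := get_mem_take hi (Nat.lt_succ_self i)
  have hwnd : w ∉ l.drop (i+1) := not_mem_drop_of_mem_take hnd hwmem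
  conv_lhs => rw [hsplit]
  rw [greedyFrom_append, greedyFrom_cons,
    greedyFrom_of_not_mem _ _ _ _ hwnd, greedyStep_apply_self]

lemma greedy_sInf_mem [Fintype V] (g : V → ℕ) (w : V) :
    sInf {n : ℕ | 0 < n ∧ ∀ z, G.Adj w z → g z ≠ n} ∈
      {n : ℕ | 0 < n ∧ ∀ z, G.Adj w z → g z ≠ n} := by
  apply Nat.sInf_mem
  refine ⟨Finset.univ.sup g + 1, Nat.succ_pos _, fun z _ hz => ?_⟩
  have := Finset.le_sup (f := g) (Finset.mem_univ z)
  omega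

lemma greedy_pos [Fintype V] (f : V → ℕ) {l : List V} (hnd : l.Nodup) (i : ℕ)
    (hi : i < l.length) : 0 < greedyFrom G f l (l.get ⟨i, hi⟩) := by
  rw [greedy_spec G f hnd i hi]
  exact (greedy_sInf_mem G _ _).1

lemma greedy_avoid [Fintype V] (f : V → ℕ) {l : List V} (hnd : l.Nodup) (i : ℕ)
    (hi : i < l.length) {z : V} (hz : G.Adj (l.get ⟨i, hi⟩) z) :
    greedyFrom G f (l.take i) z ≠ greedyFrom G f l (l.get ⟨i, hi⟩) := by
  rw [greedy_spec G f hnd i hi]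
  exact (greedy_sInf_mem G _ _).2 z hz

lemma greedy_justify [Fintype V] (f : V → ℕ) {l : List V} (hnd : l.Nodup) (i : ℕ)
    (hi : i < l.length) (n : ℕ) (hn : 0 < n)
    (hlt : n < greedyFrom G f l (l.get ⟨i, hi⟩)) :
    ∃ z, G.Adj (l.get ⟨i, hi⟩) z ∧ greedyFrom G f (l.take i) z = n := by
  rw [greedy_spec G f hnd i hi] at hlt
  have hn' : n ∉ {m : ℕ | 0 < m ∧ ∀ z, G.Adj (l.get ⟨i, hi⟩) z →
      greedyFrom G f (l.take i) z ≠ m} := fun h => absurd (Nat.sInf_le h) (by omega)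
  simp only [Set.mem_setOf_eq, not_and, not_forall] at hn'
  obtain ⟨z, hz, hzn⟩ := hn' hn
  exact ⟨z, hz, by omega⟩

lemma greedy_proper [Fintype V] {l : List V} (hnd : l.Nodup) (hmem : ∀ w, w ∈ l)
    {w z : V} (h : G.Adj w z) : greedy G l w ≠ greedy G l z := by
  obtain ⟨i, hwi⟩ := List.get_of_mem (hmem w)
  obtain ⟨j, hzj⟩ := List.get_of_mem (hmem z)
  have key : ∀ (i j : Fin l.length), (i : ℕ) < (j : ℕ) → G.Adj (l.get i) (l.get j) →
      greedy G l (l.get i) ≠ greedy G l (l.get j) := by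
    intro i j hij hadj
    have h1 := greedy_avoid G (fun _ => 0) hnd j j.isLt (z := l.get i) hadj.symm
    rwa [← greedyFrom_stable G _ hnd (get_mem_take i.isLt hij)] at h1
  rcases lt_trichotomy (i : ℕ) (j : ℕ) with hij | hij | hij
  · subst hwi hzj; exact key i j hij (by simpa using h)
  · exfalso; apply G.ne_of_adj h
    rw [← hwi, ← hzj]; congr 1; exact Fin.ext hij
  · subst hwi hzj; exact fun hh => key j i hij (by simpa using h.symm) hh.symm

end GreedyLemmas


section GkLemmas

instance {k : ℕ} : Fintype (GkVert k) :=
  Fintype.ofList ((List.ofFn (GkVert.U (k := k)) ++ List.ofFn GkVert.W ++ List.ofFn GkVert.M)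
      ++ [GkVert.u, GkVert.u', GkVert.v, GkVert.v'])
    (by intro x; cases x <;> simp [List.mem_ofFn])

def gkAdj {k : ℕ} : GkVert k → GkVert k → Prop
  | GkVert.U i, GkVert.U j => i ≠ j
  | GkVert.W i, GkVert.W j => i ≠ j
  | GkVert.M i, GkVert.M j => i ≠ j
  | GkVert.u, GkVert.U _ => True
  | GkVert.U _, GkVert.u => True
  | GkVert.u', GkVert.U _ => True
  | GkVert.U _, GkVert.u' => True
  | GkVert.v, GkVert.W _ => True
  | GkVert.W _, GkVert.v => True
  | GkVert.v', GkVert.W _ => True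
  | GkVert.W _, GkVert.v' => True
  | GkVert.u, GkVert.M i => i.val ≠ 0
  | GkVert.M i, GkVert.u => i.val ≠ 0
  | GkVert.v, GkVert.M i => i.val ≠ 0
  | GkVert.M i, GkVert.v => i.val ≠ 0
  | GkVert.u', GkVert.M i => i.val = 0
  | GkVert.M i, GkVert.u' => i.val = 0
  | GkVert.v', GkVert.M i => i.val = 0
  | GkVert.M i, GkVert.v' => i.val = 0
  | _, _ => False

set_option maxHeartbeats 1000000 in
lemma gk_adj_iff {k : ℕ} (s t : GkVert k) : (Gk k).Adj s t ↔ gkAdj s t := by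
  cases s <;> cases t <;>
    simp [Gk, SimpleGraph.fromRel_adj, gkAdj] <;> aesop

lemma gkAdj_symm {k : ℕ} {s t : GkVert k} (h : gkAdj s t) : gkAdj t s := by
  rw [← gk_adj_iff] at *; exact h.symm

variable {V : Type*} [DecidableEq V] {k : ℕ}

lemma gadgetEmb_u (a : V) : gadgetEmb k a GkVert.u = Sum.inl a := by simp [gadgetEmb]

lemma gadgetEmb_ne (a : V) (t : GkVert k) (h : t ≠ GkVert.u) :
    gadgetEmb k a t = Sum.inr (a, ⟨t, h⟩) := by simp [gadgetEmb, h]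

lemma gadgetEmb_eq_inr {b : V} {s : GkVert k} {a : V} {t : GkVert k} {ht : t ≠ GkVert.u} :
    gadgetEmb k b s = Sum.inr (a, ⟨t, ht⟩) ↔ b = a ∧ s = t := by
  unfold gadgetEmb
  split <;> simp_all <;> aesop

lemma gadgetEmb_eq_inl {b : V} {s : GkVert k} {a : V} :
    gadgetEmb k b s = Sum.inl a ↔ b = a ∧ s = GkVert.u := by
  unfold gadgetEmb
  split <;> simp_all

lemma gadgetEmb_inj_right {a : V} {s t : GkVert k} (h : gadgetEmb k a s = gadgetEmb k a t) :
    s = t := by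
  by_cases hs : s = GkVert.u <;> by_cases ht : t = GkVert.u
  · rw [hs, ht]
  · subst hs; rw [gadgetEmb_u, gadgetEmb_ne a t ht] at h; exact absurd h (by simp)
  · subst ht; rw [gadgetEmb_u, gadgetEmb_ne a s hs] at h; exact absurd h.symm (by simp)
  · rw [gadgetEmb_ne a s hs, gadgetEmb_ne a t ht] at h; simpa using h

lemma gstar_adj_inr {G : SimpleGraph V} {a : V} {t : GkVert k} {ht : t ≠ GkVert.u}
    {z : V ⊕ (V × {t : GkVert k // t ≠ GkVert.u})} :
    (Gstar G k).Adj (Sum.inr (a, ⟨t, ht⟩)) z ↔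
      ∃ s, gkAdj t s ∧ z = gadgetEmb k a s := by
  rw [Gstar, SimpleGraph.fromRel_adj]
  constructor
  · rintro ⟨hne, h | h⟩
    · rcases h with ⟨a', b', h1, _, _⟩ | ⟨b, s, s', hadj, h1, h2⟩
      · exact absurd h1 (by simp)
      · obtain ⟨rfl, rfl⟩ := gadgetEmb_eq_inr.mp h1.symm
        exact ⟨s', (gk_adj_iff _ _).mp hadj, h2⟩
    · rcases h with ⟨a', b', _, h2, _⟩ | ⟨b, s, s', hadj, h1, h2⟩
      · exact absurd h2 (by simp)
      · obtain ⟨rfl, rfl⟩ := gadgetEmb_eq_inr.mp h2.symm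
        exact ⟨s, (gk_adj_iff _ _).mp hadj.symm, h1⟩
  · rintro ⟨s, hs, rfl⟩
    have hadj : (Gk k).Adj t s := (gk_adj_iff _ _).mpr hs
    refine ⟨?_, Or.inl (Or.inr ⟨a, t, s, hadj, ?_, rfl⟩)⟩
    · rw [← gadgetEmb_ne a t ht]
      exact fun hh => hadj.ne (gadgetEmb_inj_right hh)
    · exact (gadgetEmb_ne a t ht).symm

lemma gstar_adj_inl {G : SimpleGraph V} {a : V}
    {z : V ⊕ (V × {t : GkVert k // t ≠ GkVert.u})} :
    (Gstar G k).Adj (Sum.inl a) z ↔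
      (∃ b, G.Adj a b ∧ z = Sum.inl b) ∨ (∃ s, gkAdj GkVert.u s ∧ z = gadgetEmb k a s) := by
  rw [Gstar, SimpleGraph.fromRel_adj]
  constructor
  · rintro ⟨hne, h | h⟩
    · rcases h with ⟨a', b', h1, h2, h3⟩ | ⟨b, s, s', hadj, h1, h2⟩
      · refine Or.inl ⟨b', ?_, h2⟩
        simp only [Sum.inl.injEq] at h1; exact h1 ▸ h3
      · obtain ⟨rfl, rfl⟩ := gadgetEmb_eq_inl.mp h1.symm
        exact Or.inr ⟨s', (gk_adj_iff _ _).mp hadj, h2⟩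
    · rcases h with ⟨a', b', h1, h2, h3⟩ | ⟨b, s, s', hadj, h1, h2⟩
      · simp only [Sum.inl.injEq] at h2
        exact Or.inl ⟨a', (h2 ▸ h3).symm, h1⟩
      · obtain ⟨rfl, rfl⟩ := gadgetEmb_eq_inl.mp h2.symm
        exact Or.inr ⟨s, (gk_adj_iff _ _).mp hadj.symm, h1⟩
  · rintro (⟨b, hab, rfl⟩ | ⟨s, hs, rfl⟩)
    · exact ⟨by simp [hab.ne], Or.inl (Or.inl ⟨a, b, rfl, rfl, hab⟩)⟩
    · have hadj : (Gk k).Adj GkVert.u s := (gk_adj_iff _ _).mpr hs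
      refine ⟨?_, Or.inl (Or.inr ⟨a, GkVert.u, s, hadj, ?_, rfl⟩)⟩
      · rw [← gadgetEmb_u a]
        exact fun hh => hadj.ne (gadgetEmb_inj_right hh)
      · exact (gadgetEmb_u a).symm

end GkLemmas


section Arith

/-- The `(j+1)`-st smallest positive integer different from `α`. -/
def eSkip (α j : ℕ) : ℕ := if j + 1 < α then j + 1 else j + 2

lemma eSkip_ne (α j : ℕ) : eSkip α j ≠ α := by unfold eSkip; split <;> omega

lemma eSkip_pos (α j : ℕ) : 0 < eSkip α j := by unfold eSkip; split <;> omega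

lemma eSkip_le (α j : ℕ) : eSkip α j ≤ j + 2 := by unfold eSkip; split <;> omega

lemma eSkip_ge (α j : ℕ) : j + 1 ≤ eSkip α j := by unfold eSkip; split <;> omega

lemma eSkip_strictMono {α i j : ℕ} (h : i < j) : eSkip α i < eSkip α j := by
  unfold eSkip; split <;> split <;> omega

lemma eSkip_inj {α i j : ℕ} (h : eSkip α i = eSkip α j) : i = j := by
  rcases lt_trichotomy i j with hh | hh | hh
  · exact absurd h (Nat.ne_of_lt (eSkip_strictMono hh))
  · exact hh
  · exact absurd h.symm (Nat.ne_of_lt (eSkip_strictMono hh))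

lemma eSkip_cover_lt {α n : ℕ} (h1 : 1 ≤ n) (h2 : n < α) : eSkip α (n - 1) = n := by
  unfold eSkip; split <;> omega

lemma eSkip_cover_gt {α n : ℕ} (h1 : α < n) (h2 : 1 ≤ α) : eSkip α (n - 2) = n := by
  unfold eSkip; split <;> omega

lemma eSkip_cover {α n : ℕ} (hα : 1 ≤ α) (h1 : 1 ≤ n) (h2 : n ≠ α) :
    ∃ j, eSkip α j = n ∧ j + 1 < n ∨ eSkip α j = n ∧ j + 1 = n ∧ n < α := by
  rcases lt_or_gt_of_ne h2 with h | h
  · exact ⟨n - 1, Or.inr ⟨eSkip_cover_lt h1 h, by omega, h⟩⟩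
  · exact ⟨n - 2, Or.inl ⟨eSkip_cover_gt h hα, by omega⟩⟩

lemma sInf_block (α j : ℕ) (hα : 1 ≤ α) :
    sInf {n : ℕ | 0 < n ∧ n ≠ α ∧ ∀ i < j, n ≠ eSkip α i} = eSkip α j := by
  have hmem : eSkip α j ∈ {n : ℕ | 0 < n ∧ n ≠ α ∧ ∀ i < j, n ≠ eSkip α i} :=
    ⟨eSkip_pos α j, eSkip_ne α j, fun i hi h => absurd (eSkip_inj h.symm) (by omega)⟩
  refine le_antisymm (Nat.sInf_le hmem) (le_csInf ⟨_, hmem⟩ ?_)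
  rintro n ⟨h0, hne, hall⟩
  by_contra hlt
  push_neg at hlt
  obtain ⟨i, hi⟩ := eSkip_cover hα h0 hne
  have key : ∀ i, eSkip α i = n → False := by
    intro i he
    have hij : i < j := by
      by_contra hij
      push_neg at hij
      have hle : eSkip α j ≤ eSkip α i := by
        rcases eq_or_lt_of_le hij with rfl | hh
        · exact le_rfl
        · exact le_of_lt (eSkip_strictMono hh)
      omega
    exact hall i hij he.symm
  rcases hi with ⟨he, _⟩ | ⟨he, _, _⟩ <;> exact key i he

lemma sInf_single (α m : ℕ) (hα : 1 ≤ α) (hαm : α ≤ m + 1) :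
    sInf {n : ℕ | 0 < n ∧ ∀ i < m, n ≠ eSkip α i} = α := by
  have hmem : α ∈ {n : ℕ | 0 < n ∧ ∀ i < m, n ≠ eSkip α i} :=
    ⟨hα, fun i _ h => eSkip_ne α i h.symm⟩
  refine le_antisymm (Nat.sInf_le hmem) (le_csInf ⟨_, hmem⟩ ?_)
  rintro n ⟨h0, hall⟩
  by_contra hlt
  push_neg at hlt
  have he := eSkip_cover_lt h0 hlt
  exact hall (n - 1) (by omega) he.symm

lemma sInf_last (α k : ℕ) (hα : 1 ≤ α) (hαk : α ≤ k) :
    sInf {n : ℕ | 0 < n ∧ n ≠ α ∧ ∀ i < k - 1, n ≠ eSkip α i} = k + 1 := by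
  have hmem : k + 1 ∈ {n : ℕ | 0 < n ∧ n ≠ α ∧ ∀ i < k - 1, n ≠ eSkip α i} :=
    ⟨by omega, by omega, fun i hi h => by have := eSkip_le α i; omega⟩
  refine le_antisymm (Nat.sInf_le hmem) (le_csInf ⟨_, hmem⟩ ?_)
  rintro n ⟨h0, hne, hall⟩
  by_contra hlt
  push_neg at hlt
  rcases lt_or_gt_of_ne hne with h | h
  · exact hall (n - 1) (by omega) (eSkip_cover_lt h0 h).symm
  · exact hall (n - 2) (by omega) (eSkip_cover_gt h hα).symm

end Arith


section Classify

lemma gkAdj_U_iff {k : ℕ} {i : Fin k} {s : GkVert k} :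
    gkAdj (GkVert.U i) s ↔ (∃ j, i ≠ j ∧ s = GkVert.U j) ∨ s = GkVert.u ∨ s = GkVert.u' := by
  cases s <;> simp [gkAdj] <;> aesop

lemma gkAdj_W_iff {k : ℕ} {i : Fin k} {s : GkVert k} :
    gkAdj (GkVert.W i) s ↔ (∃ j, i ≠ j ∧ s = GkVert.W j) ∨ s = GkVert.v ∨ s = GkVert.v' := by
  cases s <;> simp [gkAdj] <;> aesop

lemma gkAdj_M_iff {k : ℕ} {i : Fin k} {s : GkVert k} :
    gkAdj (GkVert.M i) s ↔ (∃ j, i ≠ j ∧ s = GkVert.M j) ∨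
      (i.val ≠ 0 ∧ (s = GkVert.u ∨ s = GkVert.v)) ∨
      (i.val = 0 ∧ (s = GkVert.u' ∨ s = GkVert.v')) := by
  cases s <;> simp [gkAdj] <;> aesop

lemma gkAdj_u_iff {k : ℕ} {s : GkVert k} :
    gkAdj GkVert.u s ↔ (∃ j, s = GkVert.U j) ∨ (∃ i, (i : Fin k).val ≠ 0 ∧ s = GkVert.M i) := by
  cases s <;> simp [gkAdj]

lemma gkAdj_u'_iff {k : ℕ} {s : GkVert k} :
    gkAdj GkVert.u' s ↔ (∃ j, s = GkVert.U j) ∨ (∃ i, (i : Fin k).val = 0 ∧ s = GkVert.M i) := by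
  cases s <;> simp [gkAdj]

lemma gkAdj_v_iff {k : ℕ} {s : GkVert k} :
    gkAdj GkVert.v s ↔ (∃ j, s = GkVert.W j) ∨ (∃ i, (i : Fin k).val ≠ 0 ∧ s = GkVert.M i) := by
  cases s <;> simp [gkAdj]

lemma gkAdj_v'_iff {k : ℕ} {s : GkVert k} :
    gkAdj GkVert.v' s ↔ (∃ j, s = GkVert.W j) ∨ (∃ i, (i : Fin k).val = 0 ∧ s = GkVert.M i) := by
  cases s <;> simp [gkAdj]

end Classify

section Block
variable {V' : Type*} [DecidableEq V'] [Fintype V'] (G' : SimpleGraph V')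

lemma block_lemma (α : ℕ) (hα : 1 ≤ α) (cur : V' → ℕ) (zs : List V') (hnd : zs.Nodup)
    (hcur0 : ∀ z ∈ zs, cur z = 0)
    (hclique : ∀ z ∈ zs, ∀ z' ∈ zs, z ≠ z' → G'.Adj z z')
    (hout : ∀ z ∈ zs, ∀ y, G'.Adj z y → y ∉ zs → cur y = 0 ∨ cur y = α)
    (hwit : ∀ z ∈ zs, ∃ y, G'.Adj z y ∧ y ∉ zs ∧ cur y = α) :
    ∀ j (hj : j < zs.length), greedyFrom G' cur zs (zs.get ⟨j, hj⟩) = eSkip α j := by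
  intro j
  induction j using Nat.strong_induction_on with
  | _ j IH =>
  intro hj
  rw [greedy_spec G' cur hnd j hj]
  have hstate : ∀ i (hi : i < j), greedyFrom G' cur (zs.take j) (zs.get ⟨i, lt_trans hi hj⟩)
      = eSkip α i := by
    intro i hi
    rw [← greedyFrom_stable G' cur hnd (get_mem_take (lt_trans hi hj) hi)]
    exact IH i hi (lt_trans hi hj)
  have hset : {n : ℕ | 0 < n ∧ ∀ z, G'.Adj (zs.get ⟨j, hj⟩) z →
      greedyFrom G' cur (zs.take j) z ≠ n}
      = {n : ℕ | 0 < n ∧ n ≠ α ∧ ∀ i < j, n ≠ eSkip α i} := by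
    ext n
    simp only [Set.mem_setOf_eq]
    constructor
    · rintro ⟨h0, hall⟩
      refine ⟨h0, ?_, ?_⟩
      · obtain ⟨y, hy1, hy2, hy3⟩ := hwit _ (List.get_mem zs _)
        have h := hall y hy1
        rw [greedyFrom_of_not_mem _ _ _ _ (fun hm => hy2 (List.mem_of_mem_take hm)), hy3] at h
        exact fun hc => h hc.symm
      · intro i hi
        have hadj : G'.Adj (zs.get ⟨j, hj⟩) (zs.get ⟨i, lt_trans hi hj⟩) := by
          apply hclique _ (List.get_mem zs _) _ (List.get_mem zs _)
          intro hc
          have := (List.Nodup.get_inj_iff hnd).mp hc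
          simp only [Fin.mk.injEq] at this
          omega
        have h := hall _ hadj
        rw [hstate i hi] at h
        exact fun hc => h hc.symm
    · rintro ⟨h0, hne, hall⟩
      refine ⟨h0, ?_⟩
      intro z hz
      by_cases hzt : z ∈ zs.take j
      · rw [List.mem_take_iff_getElem] at hzt
        obtain ⟨i, hi, hieq⟩ := hzt
        have hi' : i < j := lt_of_lt_of_le hi (min_le_left _ _)
        have : z = zs.get ⟨i, lt_trans hi' hj⟩ := by rw [← hieq]; rfl
        rw [this, hstate i hi']
        exact fun hc => hall i hi' hc.symm
      · rw [greedyFrom_of_not_mem _ _ _ _ hzt]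
        by_cases hzs : z ∈ zs
        · rw [hcur0 z hzs]; omega
        · rcases hout _ (List.get_mem zs _) z hz hzs with h | h <;> rw [h] <;> omega
  rw [hset, sInf_block α j hα]

end Block


section Gadget

def mIdx (k : ℕ) (i : Fin (k - 1)) : Fin k := ⟨i.val + 1, by have := i.isLt; omega⟩

def gklist (k : ℕ) (hk : 0 < k) : List (GkVert k) :=
  List.ofFn GkVert.U ++ [GkVert.u'] ++ List.ofFn (fun i => GkVert.M (mIdx k i)) ++ [GkVert.v]
    ++ List.ofFn GkVert.W ++ [GkVert.v', GkVert.M ⟨0, hk⟩]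

lemma mem_gklist {k : ℕ} (hk : 0 < k) (t : GkVert k) : t ∈ gklist k hk ↔ t ≠ GkVert.u := by
  cases t <;> simp [gklist, List.mem_ofFn, mIdx, Fin.ext_iff]
  case M i =>
    rcases Nat.eq_zero_or_pos i.val with h | h
    · exact Or.inr h
    · refine Or.inl ⟨⟨i.val - 1, by have := i.isLt; omega⟩, by simp; omega⟩

/-- The value of the greedy coloring on the gadget attached at a vertex of color `α`. -/
def gval (k α : ℕ) : GkVert k → ℕ
  | GkVert.U i => eSkip α i.val
  | GkVert.W i => eSkip α i.val
  | GkVert.M i => if i.val = 0 then k + 1 else eSkip α (i.val - 1)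
  | GkVert.u' => α
  | GkVert.v => α
  | GkVert.v' => α
  | GkVert.u => α

lemma gval_pos {k α : ℕ} (hα : 1 ≤ α) (t : GkVert k) : 1 ≤ gval k α t := by
  cases t with
  | U i => exact eSkip_pos α i.val
  | W i => exact eSkip_pos α i.val
  | M i =>
    simp only [gval]; split
    · omega
    · exact eSkip_pos α _
  | u => exact hα
  | u' => exact hα
  | v => exact hα
  | v' => exact hα

lemma gval_le {k α : ℕ} (hαk : α ≤ k) (t : GkVert k) : gval k α t ≤ k + 1 := by
  cases t with
  | U i => have h := eSkip_le α i.val; have := i.isLt; simp [gval]; omega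
  | W i => have h := eSkip_le α i.val; have := i.isLt; simp [gval]; omega
  | M i =>
    simp only [gval]
    split
    · omega
    · have h := eSkip_le α (i.val - 1); have := i.isLt; omega
  | u => simp [gval]; omega
  | u' => simp [gval]; omega
  | v => simp [gval]; omega
  | v' => simp [gval]; omega

variable {V : Type*} [DecidableEq V] [Fintype V]

def glist (k : ℕ) (hk : 0 < k) (a : V) : List (V ⊕ (V × {t : GkVert k // t ≠ GkVert.u})) :=
  (gklist k hk).map (gadgetEmb k a)

lemma gadgetEmb_injective {k : ℕ} (a : V) : Function.Injective (gadgetEmb k a) :=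
  fun _ _ h => gadgetEmb_inj_right h

lemma gadgetEmb_eq_iff {k : ℕ} {a : V} {s t : GkVert k} :
    gadgetEmb k a s = gadgetEmb k a t ↔ s = t :=
  ⟨gadgetEmb_inj_right, by rintro rfl; rfl⟩

lemma mem_glist {k : ℕ} {hk : 0 < k} {a : V} {y} :
    y ∈ glist k hk a ↔ ∃ t, t ≠ GkVert.u ∧ y = gadgetEmb k a t := by
  simp only [glist, List.mem_map, mem_gklist]
  constructor
  · rintro ⟨t, ht, rfl⟩; exact ⟨t, ht, rfl⟩
  · rintro ⟨t, ht, rfl⟩; exact ⟨t, ht, rfl⟩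

lemma gklist_nodup {k : ℕ} (hk : 0 < k) : (gklist k hk).Nodup := by
  simp [gklist, List.nodup_append, List.nodup_ofFn, List.mem_ofFn, List.disjoint_left,
    mIdx, Fin.ext_iff, Function.Injective]
  exact ⟨fun a b hb => by rcases hb with ⟨i, rfl⟩ | rfl | rfl <;> simp,
    fun a b hb => by rcases hb with ⟨i, rfl⟩ | rfl | ⟨i, rfl⟩ | rfl | rfl <;> simp⟩

lemma glist_nodup {k : ℕ} (hk : 0 < k) (a : V) : (glist k hk a).Nodup :=
  List.Nodup.map (gadgetEmb_injective a) (gklist_nodup hk)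

lemma adj_emb {k : ℕ} {G : SimpleGraph V} {a : V} {t s : GkVert k} (ht : t ≠ GkVert.u)
    (h : gkAdj t s) : (Gstar G k).Adj (gadgetEmb k a t) (gadgetEmb k a s) := by
  rw [gadgetEmb_ne a t ht]
  exact gstar_adj_inr.mpr ⟨s, h, rfl⟩

lemma adj_emb_iff {k : ℕ} {G : SimpleGraph V} {a : V} {t : GkVert k} (ht : t ≠ GkVert.u)
    {y} : (Gstar G k).Adj (gadgetEmb k a t) y ↔ ∃ s, gkAdj t s ∧ y = gadgetEmb k a s := by
  rw [gadgetEmb_ne a t ht]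
  exact gstar_adj_inr

end Gadget


section GadgetMain
variable {V : Type*} [DecidableEq V] [Fintype V]

lemma gadget_lemma (G : SimpleGraph V) (k : ℕ) (hk : 0 < k) (a : V) (α : ℕ)
    (hα : 1 ≤ α) (hαk : α ≤ k)
    (cur : V ⊕ (V × {t : GkVert k // t ≠ GkVert.u}) → ℕ)
    (hcura : cur (Sum.inl a) = α)
    (hcur0 : ∀ t, (ht : t ≠ GkVert.u) → cur (gadgetEmb k a t) = 0) :
    (∀ y, y ∉ glist k hk a → greedyFrom (Gstar G k) cur (glist k hk a) y = cur y) ∧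
    (∀ t, (ht : t ≠ GkVert.u) →
      greedyFrom (Gstar G k) cur (glist k hk a) (gadgetEmb k a t) = gval k α t) := by
  set G' := Gstar G k with hG'
  refine ⟨fun y hy => greedyFrom_of_not_mem _ _ _ _ hy, ?_⟩
  have hEne : ∀ {s t : GkVert k}, s ≠ t → gadgetEmb k a s ≠ gadgetEmb k a t := fun h hc => h (gadgetEmb_inj_right hc)
  set L1 : List (V ⊕ (V × {t : GkVert k // t ≠ GkVert.u})) :=
    List.ofFn (fun i : Fin k => gadgetEmb k a (GkVert.U i)) with hL1
  set L3 : List (V ⊕ (V × {t : GkVert k // t ≠ GkVert.u})) :=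
    List.ofFn (fun i : Fin (k-1) => gadgetEmb k a (GkVert.M (mIdx k i))) with hL3
  set L5 : List (V ⊕ (V × {t : GkVert k // t ≠ GkVert.u})) :=
    List.ofFn (fun i : Fin k => gadgetEmb k a (GkVert.W i)) with hL5
  have hsplit : glist k hk a =
      L1 ++ [gadgetEmb k a GkVert.u'] ++ L3 ++ [gadgetEmb k a GkVert.v] ++ L5 ++ [gadgetEmb k a GkVert.v', gadgetEmb k a (GkVert.M ⟨0, hk⟩)] := by
    simp [glist, gklist, List.map_ofFn, hL1, hL3, hL5, Function.comp_def]
  set c1 := greedyFrom G' cur L1 with hc1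
  set c2 := greedyStep G' c1 (gadgetEmb k a GkVert.u') with hc2
  set c3 := greedyFrom G' c2 L3 with hc3
  set c4 := greedyStep G' c3 (gadgetEmb k a GkVert.v) with hc4
  set c5 := greedyFrom G' c4 L5 with hc5
  set c6 := greedyStep G' c5 (gadgetEmb k a GkVert.v') with hc6
  set c7 := greedyStep G' c6 (gadgetEmb k a (GkVert.M ⟨0, hk⟩)) with hc7
  have hfinal : greedyFrom G' cur (glist k hk a) = c7 := by
    rw [hsplit, greedyFrom_append, greedyFrom_append, greedyFrom_append, greedyFrom_append,
      greedyFrom_append]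
    rfl
  -- membership helpers
  have hmemL1 : ∀ {y}, y ∈ L1 ↔ ∃ i : Fin k, y = gadgetEmb k a (GkVert.U i) := by
    intro y; rw [hL1]; simp [List.mem_ofFn, eq_comm]
  have hmemL3 : ∀ {y}, y ∈ L3 ↔ ∃ i : Fin (k-1), y = gadgetEmb k a (GkVert.M (mIdx k i)) := by
    intro y; rw [hL3]; simp [List.mem_ofFn, eq_comm]
  have hmemL5 : ∀ {y}, y ∈ L5 ↔ ∃ i : Fin k, y = gadgetEmb k a (GkVert.W i) := by
    intro y; rw [hL5]; simp [List.mem_ofFn, eq_comm]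
  have hnin1 : ∀ {t : GkVert k}, (∀ i, t ≠ GkVert.U i) → gadgetEmb k a t ∉ L1 := by
    intro t ht hmem
    obtain ⟨i, hi⟩ := hmemL1.mp hmem
    exact ht i (gadgetEmb_inj_right hi)
  have hnin3 : ∀ {t : GkVert k}, (∀ i, t ≠ GkVert.M (mIdx k i)) → gadgetEmb k a t ∉ L3 := by
    intro t ht hmem
    obtain ⟨i, hi⟩ := hmemL3.mp hmem
    exact ht i (gadgetEmb_inj_right hi)
  have hnin5 : ∀ {t : GkVert k}, (∀ i, t ≠ GkVert.W i) → gadgetEmb k a t ∉ L5 := by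
    intro t ht hmem
    obtain ⟨i, hi⟩ := hmemL5.mp hmem
    exact ht i (gadgetEmb_inj_right hi)
  have hinl1 : (Sum.inl a : V ⊕ (V × {t : GkVert k // t ≠ GkVert.u})) ∉ L1 := by
    intro hmem; obtain ⟨i, hi⟩ := hmemL1.mp hmem
    rw [gadgetEmb_ne a _ (by simp)] at hi; exact nomatch hi
  have hinl3 : (Sum.inl a : V ⊕ (V × {t : GkVert k // t ≠ GkVert.u})) ∉ L3 := by
    intro hmem; obtain ⟨i, hi⟩ := hmemL3.mp hmem
    rw [gadgetEmb_ne a _ (by simp)] at hi; exact nomatch hi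
  have hinl5 : (Sum.inl a : V ⊕ (V × {t : GkVert k // t ≠ GkVert.u})) ∉ L5 := by
    intro hmem; obtain ⟨i, hi⟩ := hmemL5.mp hmem
    rw [gadgetEmb_ne a _ (by simp)] at hi; exact nomatch hi
  have hinlne : ∀ {t : GkVert k}, t ≠ GkVert.u → (Sum.inl a : V ⊕ (V × {t : GkVert k // t ≠ GkVert.u})) ≠ gadgetEmb k a t := by
    intro t ht hc; rw [gadgetEmb_ne a t ht] at hc; exact nomatch hc
  -- chains of unchanged values
  have chain2 : ∀ y, y ∉ L1 → y ≠ gadgetEmb k a GkVert.u' → c2 y = cur y := by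
    intro y h1 h2
    rw [hc2, greedyStep_apply_ne _ _ _ _ h2, hc1, greedyFrom_of_not_mem _ _ _ _ h1]
  have chain3 : ∀ y, y ∉ L1 → y ≠ gadgetEmb k a GkVert.u' → y ∉ L3 → c3 y = cur y := by
    intro y h1 h2 h3
    rw [hc3, greedyFrom_of_not_mem _ _ _ _ h3]; exact chain2 y h1 h2
  have chain4 : ∀ y, y ∉ L1 → y ≠ gadgetEmb k a GkVert.u' → y ∉ L3 → y ≠ gadgetEmb k a GkVert.v → c4 y = cur y := by
    intro y h1 h2 h3 h4
    rw [hc4, greedyStep_apply_ne _ _ _ _ h4]; exact chain3 y h1 h2 h3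
  have chain5 : ∀ y, y ∉ L1 → y ≠ gadgetEmb k a GkVert.u' → y ∉ L3 → y ≠ gadgetEmb k a GkVert.v → y ∉ L5 →
      c5 y = cur y := by
    intro y h1 h2 h3 h4 h5
    rw [hc5, greedyFrom_of_not_mem _ _ _ _ h5]; exact chain4 y h1 h2 h3 h4
  have chain6 : ∀ y, y ∉ L1 → y ≠ gadgetEmb k a GkVert.u' → y ∉ L3 → y ≠ gadgetEmb k a GkVert.v → y ∉ L5 →
      y ≠ gadgetEmb k a GkVert.v' → c6 y = cur y := by
    intro y h1 h2 h3 h4 h5 h6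
    rw [hc6, greedyStep_apply_ne _ _ _ _ h6]; exact chain5 y h1 h2 h3 h4 h5
  have ha1 : c1 (Sum.inl a) = α := by rw [hc1, greedyFrom_of_not_mem _ _ _ _ hinl1, hcura]
  have ha2 : c2 (Sum.inl a) = α := by
    rw [chain2 _ hinl1 (hinlne (by simp)), hcura]
  have ha4 : c4 (Sum.inl a) = α := by
    rw [chain4 _ hinl1 (hinlne (by simp)) hinl3 (hinlne (by simp)), hcura]
  -- Stage 1 : the U-block
  have r1 : ∀ i : Fin k, c1 (gadgetEmb k a (GkVert.U i)) = eSkip α i.val := by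
    have hnd : L1.Nodup := by
      rw [hL1]
      exact List.nodup_ofFn.mpr (fun i j h => by
        have := gadgetEmb_inj_right h; simpa using this)
    have hb := block_lemma G' α hα cur L1 hnd
      (fun z hz => by
        obtain ⟨i, rfl⟩ := hmemL1.mp hz
        exact hcur0 _ (by simp))
      (fun z hz z' hz' hne => by
        obtain ⟨i, rfl⟩ := hmemL1.mp hz
        obtain ⟨j, rfl⟩ := hmemL1.mp hz'
        refine adj_emb (by simp) ?_
        have hij : i ≠ j := fun hc => hne (by rw [hc])
        simpa [gkAdj] using hij)
      (fun z hz y hadj hy => by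
        obtain ⟨i, rfl⟩ := hmemL1.mp hz
        rw [adj_emb_iff (by simp)] at hadj
        obtain ⟨s, hs, rfl⟩ := hadj
        rcases gkAdj_U_iff.mp hs with ⟨j, hij, rfl⟩ | rfl | rfl
        · exact absurd (hmemL1.mpr ⟨j, rfl⟩) hy
        · rw [gadgetEmb_u]; exact Or.inr hcura
        · exact Or.inl (hcur0 _ (by simp)))
      (fun z hz => by
        obtain ⟨i, rfl⟩ := hmemL1.mp hz
        refine ⟨gadgetEmb k a GkVert.u, adj_emb (by simp) (by simp [gkAdj]), ?_, ?_⟩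
        · exact hnin1 (fun j => by simp)
        · rw [gadgetEmb_u]; exact hcura)
    intro i
    have hlen : (i : ℕ) < L1.length := by rw [hL1]; simp [i.isLt]
    have := hb i.val hlen
    rw [← hc1] at this
    have hget : L1.get ⟨i.val, hlen⟩ = gadgetEmb k a (GkVert.U i) := by
      simp [hL1, List.get_ofFn]
    rwa [hget] at this
  -- Stage 2 : u'
  have r2 : c2 (gadgetEmb k a GkVert.u') = α := by
    rw [hc2, greedyStep_apply_self]
    have hset : {n : ℕ | 0 < n ∧ ∀ z, G'.Adj (gadgetEmb k a GkVert.u') z → c1 z ≠ n}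
        = {n : ℕ | 0 < n ∧ ∀ m < k, n ≠ eSkip α m} := by
      ext n
      simp only [Set.mem_setOf_eq]
      constructor
      · rintro ⟨h0, hall⟩
        refine ⟨h0, fun m hm => ?_⟩
        have hadj : G'.Adj (gadgetEmb k a GkVert.u') (gadgetEmb k a (GkVert.U ⟨m, hm⟩)) :=
          adj_emb (by simp) (by simp [gkAdj])
        have := hall _ hadj
        rw [r1 ⟨m, hm⟩] at this
        exact fun hc => this hc.symm
      · rintro ⟨h0, hall⟩
        refine ⟨h0, fun z hadj => ?_⟩
        rw [adj_emb_iff (by simp)] at hadj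
        obtain ⟨s, hs, rfl⟩ := hadj
        rcases gkAdj_u'_iff.mp hs with ⟨j, rfl⟩ | ⟨i, hi0, rfl⟩
        · rw [r1 j]; exact fun hc => hall j.val j.isLt hc.symm
        · rw [hc1, greedyFrom_of_not_mem _ _ _ _ (hnin1 (fun j => by simp)),
            hcur0 _ (by simp)]
          omega
    rw [hset, sInf_single α k hα (by omega)]
  -- Stage 3 : the M-block
  have r3 : ∀ i : Fin (k-1), c3 (gadgetEmb k a (GkVert.M (mIdx k i))) = eSkip α i.val := by
    have hnd : L3.Nodup := by
      rw [hL3]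
      exact List.nodup_ofFn.mpr (fun i j h => by
        have := gadgetEmb_inj_right h
        simp only [GkVert.M.injEq, mIdx, Fin.mk.injEq] at this
        exact Fin.ext (by omega))
    have hb := block_lemma G' α hα c2 L3 hnd
      (fun z hz => by
        obtain ⟨i, rfl⟩ := hmemL3.mp hz
        rw [chain2 _ (hnin1 (fun j => by simp)) (hEne (by simp)), hcur0 _ (by simp)])
      (fun z hz z' hz' hne => by
        obtain ⟨i, rfl⟩ := hmemL3.mp hz
        obtain ⟨j, rfl⟩ := hmemL3.mp hz'
        refine adj_emb (by simp) ?_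
        have hij : mIdx k i ≠ mIdx k j := fun hc => hne (by rw [hc])
        simpa [gkAdj] using hij)
      (fun z hz y hadj hy => by
        obtain ⟨i, rfl⟩ := hmemL3.mp hz
        rw [adj_emb_iff (by simp)] at hadj
        obtain ⟨s, hs, rfl⟩ := hadj
        rcases gkAdj_M_iff.mp hs with ⟨j, hij, rfl⟩ | ⟨h0, rfl | rfl⟩ | ⟨h0, h⟩
        · refine Or.inl ?_
          rw [chain2 _ (hnin1 (fun j' => by simp)) (hEne (by simp)), hcur0 _ (by simp)]
        · rw [gadgetEmb_u]; exact Or.inr ha2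
        · refine Or.inl ?_
          rw [chain2 _ (hnin1 (fun j' => by simp)) (hEne (by simp)), hcur0 _ (by simp)]
        · exfalso; simp [mIdx] at h0
      )
      (fun z hz => by
        obtain ⟨i, rfl⟩ := hmemL3.mp hz
        refine ⟨gadgetEmb k a GkVert.u, adj_emb (by simp) (by simp [gkAdj, mIdx]), ?_, ?_⟩
        · exact hnin3 (fun j => by simp)
        · rw [gadgetEmb_u]; exact ha2)
    intro i
    have hlen : (i : ℕ) < L3.length := by rw [hL3]; simp [i.isLt]
    have := hb i.val hlen
    rw [← hc3] at this
    have hget : L3.get ⟨i.val, hlen⟩ = gadgetEmb k a (GkVert.M (mIdx k i)) := by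
      simp [hL3, List.get_ofFn]
    rwa [hget] at this
  -- value of M-copies with nonzero index, at stage 3
  have r3' : ∀ i : Fin k, i.val ≠ 0 → c3 (gadgetEmb k a (GkVert.M i)) = eSkip α (i.val - 1) := by
    intro i hi
    have : i = mIdx k ⟨i.val - 1, by have := i.isLt; omega⟩ := by
      have hlt := i.isLt
      simp only [mIdx, Fin.ext_iff]
      omega
    rw [this, r3]
    simp [mIdx]
  -- Stage 4 : v
  have r4 : c4 (gadgetEmb k a GkVert.v) = α := by
    rw [hc4, greedyStep_apply_self]
    have hset : {n : ℕ | 0 < n ∧ ∀ z, G'.Adj (gadgetEmb k a GkVert.v) z → c3 z ≠ n}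
        = {n : ℕ | 0 < n ∧ ∀ m < k - 1, n ≠ eSkip α m} := by
      ext n
      simp only [Set.mem_setOf_eq]
      constructor
      · rintro ⟨h0, hall⟩
        refine ⟨h0, fun m hm => ?_⟩
        have hadj : G'.Adj (gadgetEmb k a GkVert.v) (gadgetEmb k a (GkVert.M (mIdx k ⟨m, hm⟩))) :=
          adj_emb (by simp) (by simp [gkAdj, mIdx])
        have := hall _ hadj
        rw [r3 ⟨m, hm⟩] at this
        exact fun hc => this hc.symm
      · rintro ⟨h0, hall⟩
        refine ⟨h0, fun z hadj => ?_⟩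
        rw [adj_emb_iff (by simp)] at hadj
        obtain ⟨s, hs, rfl⟩ := hadj
        rcases gkAdj_v_iff.mp hs with ⟨j, rfl⟩ | ⟨i, hi0, rfl⟩
        · rw [chain3 _ (hnin1 (fun j' => by simp)) (hEne (by simp))
            (hnin3 (fun j' => by simp)), hcur0 _ (by simp)]
          omega
        · rw [r3' i hi0]
          have : i.val - 1 < k - 1 := by have := i.isLt; omega
          exact fun hc => hall _ this hc.symm
    rw [hset, sInf_single α (k-1) hα (by omega)]
  -- Stage 5 : the W-block
  have r5 : ∀ i : Fin k, c5 (gadgetEmb k a (GkVert.W i)) = eSkip α i.val := by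
    have hnd : L5.Nodup := by
      rw [hL5]
      exact List.nodup_ofFn.mpr (fun i j h => by
        have := gadgetEmb_inj_right h; simpa using this)
    have hb := block_lemma G' α hα c4 L5 hnd
      (fun z hz => by
        obtain ⟨i, rfl⟩ := hmemL5.mp hz
        rw [chain4 _ (hnin1 (fun j => by simp)) (hEne (by simp)) (hnin3 (fun j => by simp))
          (hEne (by simp)), hcur0 _ (by simp)])
      (fun z hz z' hz' hne => by
        obtain ⟨i, rfl⟩ := hmemL5.mp hz
        obtain ⟨j, rfl⟩ := hmemL5.mp hz'
        refine adj_emb (by simp) ?_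
        have hij : i ≠ j := fun hc => hne (by rw [hc])
        simpa [gkAdj] using hij)
      (fun z hz y hadj hy => by
        obtain ⟨i, rfl⟩ := hmemL5.mp hz
        rw [adj_emb_iff (by simp)] at hadj
        obtain ⟨s, hs, rfl⟩ := hadj
        rcases gkAdj_W_iff.mp hs with ⟨j, hij, rfl⟩ | rfl | rfl
        · exact absurd (hmemL5.mpr ⟨j, rfl⟩) hy
        · exact Or.inr (by rw [r4])
        · refine Or.inl ?_
          rw [chain4 _ (hnin1 (fun j' => by simp)) (hEne (by simp))
            (hnin3 (fun j' => by simp)) (hEne (by simp)), hcur0 _ (by simp)])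
      (fun z hz => by
        obtain ⟨i, rfl⟩ := hmemL5.mp hz
        refine ⟨gadgetEmb k a GkVert.v, adj_emb (by simp) (by simp [gkAdj]), ?_, ?_⟩
        · exact hnin5 (fun j => by simp)
        · rw [r4])
    intro i
    have hlen : (i : ℕ) < L5.length := by rw [hL5]; simp [i.isLt]
    have := hb i.val hlen
    rw [← hc5] at this
    have hget : L5.get ⟨i.val, hlen⟩ = gadgetEmb k a (GkVert.W i) := by
      simp [hL5, List.get_ofFn]
    rwa [hget] at this
  -- values of u' and M-copies at stage 5
  have r5u' : c5 (gadgetEmb k a GkVert.u') = α := by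
    rw [hc5, greedyFrom_of_not_mem _ _ _ _ (hnin5 (fun j => by simp)),
      hc4, greedyStep_apply_ne _ _ _ _ (hEne (by simp)),
      hc3, greedyFrom_of_not_mem _ _ _ _ (hnin3 (fun j => by simp))]
    exact r2
  have r5M : ∀ i : Fin k, i.val ≠ 0 → c5 (gadgetEmb k a (GkVert.M i)) = eSkip α (i.val - 1) := by
    intro i hi
    rw [hc5, greedyFrom_of_not_mem _ _ _ _ (hnin5 (fun j => by simp)),
      hc4, greedyStep_apply_ne _ _ _ _ (hEne (by simp))]
    exact r3' i hi
  have r5M0 : c5 (gadgetEmb k a (GkVert.M ⟨0, hk⟩)) = 0 := by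
    rw [chain5 _ (hnin1 (fun j => by simp)) (hEne (by simp))
      (hnin3 (fun j => by simp [mIdx, Fin.ext_iff])) (hEne (by simp))
      (hnin5 (fun j => by simp)), hcur0 _ (by simp)]
  -- Stage 6 : v'
  have r6 : c6 (gadgetEmb k a GkVert.v') = α := by
    rw [hc6, greedyStep_apply_self]
    have hset : {n : ℕ | 0 < n ∧ ∀ z, G'.Adj (gadgetEmb k a GkVert.v') z → c5 z ≠ n}
        = {n : ℕ | 0 < n ∧ ∀ m < k, n ≠ eSkip α m} := by
      ext n
      simp only [Set.mem_setOf_eq]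
      constructor
      · rintro ⟨h0, hall⟩
        refine ⟨h0, fun m hm => ?_⟩
        have hadj : G'.Adj (gadgetEmb k a GkVert.v') (gadgetEmb k a (GkVert.W ⟨m, hm⟩)) :=
          adj_emb (by simp) (by simp [gkAdj])
        have := hall _ hadj
        rw [r5 ⟨m, hm⟩] at this
        exact fun hc => this hc.symm
      · rintro ⟨h0, hall⟩
        refine ⟨h0, fun z hadj => ?_⟩
        rw [adj_emb_iff (by simp)] at hadj
        obtain ⟨s, hs, rfl⟩ := hadj
        rcases gkAdj_v'_iff.mp hs with ⟨j, rfl⟩ | ⟨i, hi0, rfl⟩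
        · rw [r5 j]; exact fun hc => hall j.val j.isLt hc.symm
        · have : i = ⟨0, hk⟩ := Fin.ext hi0
          rw [this, r5M0]; omega
    rw [hset, sInf_single α k hα (by omega)]
  -- values at stage 6
  have r6u' : c6 (gadgetEmb k a GkVert.u') = α := by
    rw [hc6, greedyStep_apply_ne _ _ _ _ (hEne (by simp))]; exact r5u'
  have r6M : ∀ i : Fin k, i.val ≠ 0 → c6 (gadgetEmb k a (GkVert.M i)) = eSkip α (i.val - 1) := by
    intro i hi
    rw [hc6, greedyStep_apply_ne _ _ _ _ (hEne (by simp))]; exact r5M i hi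
  -- Stage 7 : the distinguished vertex w
  have r7 : c7 (gadgetEmb k a (GkVert.M ⟨0, hk⟩)) = k + 1 := by
    rw [hc7, greedyStep_apply_self]
    have hset : {n : ℕ | 0 < n ∧ ∀ z, G'.Adj (gadgetEmb k a (GkVert.M ⟨0, hk⟩)) z → c6 z ≠ n}
        = {n : ℕ | 0 < n ∧ n ≠ α ∧ ∀ m < k - 1, n ≠ eSkip α m} := by
      ext n
      simp only [Set.mem_setOf_eq]
      constructor
      · rintro ⟨h0, hall⟩
        refine ⟨h0, ?_, fun m hm => ?_⟩
        · have hadj : G'.Adj (gadgetEmb k a (GkVert.M ⟨0, hk⟩)) (gadgetEmb k a GkVert.u') :=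
            adj_emb (by simp) (by simp [gkAdj])
          have := hall _ hadj
          rw [r6u'] at this
          exact fun hc => this hc.symm
        · have hadj : G'.Adj (gadgetEmb k a (GkVert.M ⟨0, hk⟩)) (gadgetEmb k a (GkVert.M (mIdx k ⟨m, hm⟩))) :=
            adj_emb (by simp) (by simp [gkAdj, mIdx, Fin.ext_iff])
          have := hall _ hadj
          rw [r6M _ (by simp [mIdx])] at this
          simp only [mIdx] at this
          exact fun hc => this (by simpa using hc.symm)
      · rintro ⟨h0, hne, hall⟩
        refine ⟨h0, fun z hadj => ?_⟩
        rw [adj_emb_iff (by simp)] at hadj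
        obtain ⟨s, hs, rfl⟩ := hadj
        rcases gkAdj_M_iff.mp hs with ⟨j, hij, rfl⟩ | ⟨h0', _⟩ | ⟨_, rfl | rfl⟩
        · have hj0 : j.val ≠ 0 := fun hc => hij (Fin.ext (by simp [hc]))
          rw [r6M j hj0]
          have : j.val - 1 < k - 1 := by have := j.isLt; omega
          exact fun hc => hall _ this hc.symm
        · exact absurd rfl h0'
        · rw [r6u']; exact fun hc => hne hc.symm
        · rw [r6]; exact fun hc => hne hc.symm
    rw [hset, sInf_last α k hα hαk]
  -- Collect the final values
  intro t ht
  rw [hfinal]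
  cases t with
  | u => exact absurd rfl ht
  | U i =>
    rw [hc7, greedyStep_apply_ne _ _ _ _ (hEne (by simp)),
      hc6, greedyStep_apply_ne _ _ _ _ (hEne (by simp)),
      hc5, greedyFrom_of_not_mem _ _ _ _ (hnin5 (fun j => by simp)),
      hc4, greedyStep_apply_ne _ _ _ _ (hEne (by simp)),
      hc3, greedyFrom_of_not_mem _ _ _ _ (hnin3 (fun j => by simp))]
    rw [hc2, greedyStep_apply_ne _ _ _ _ (hEne (by simp))]
    exact r1 i
  | u' =>
    rw [hc7, greedyStep_apply_ne _ _ _ _ (hEne (by simp))]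
    exact r6u'
  | M i =>
    rcases Nat.eq_zero_or_pos i.val with h0 | h0
    · have : i = ⟨0, hk⟩ := Fin.ext h0
      rw [this, r7, gval]
      simp
    · rw [hc7, greedyStep_apply_ne _ _ _ _ (hEne (by simp [Fin.ext_iff]; omega))]
      rw [r6M i (by omega), gval]
      simp [Nat.pos_iff_ne_zero.mp h0]
  | v =>
    rw [hc7, greedyStep_apply_ne _ _ _ _ (hEne (by simp)),
      hc6, greedyStep_apply_ne _ _ _ _ (hEne (by simp)),
      hc5, greedyFrom_of_not_mem _ _ _ _ (hnin5 (fun j => by simp))]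
    exact r4
  | W i =>
    rw [hc7, greedyStep_apply_ne _ _ _ _ (hEne (by simp)),
      hc6, greedyStep_apply_ne _ _ _ _ (hEne (by simp))]
    exact r5 i
  | v' =>
    rw [hc7, greedyStep_apply_ne _ _ _ _ (hEne (by simp))]
    exact r6

end GadgetMain


section ConnOrderHelpers
variable {V : Type*} [DecidableEq V] (G : SimpleGraph V)

def QProp (G : SimpleGraph V) (l : List V) : Prop :=
  ∀ i (hi : i < l.length), 0 < i → ∃ z ∈ l.take i, G.Adj (l.get ⟨i, hi⟩) z

lemma isConnectedOrder_of {l : List V} (hnd : l.Nodup) (hmem : ∀ w, w ∈ l)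
    (hq : QProp G l) : IsConnectedOrder G l := by
  refine ⟨hnd, hmem, ?_⟩
  intro i hi0
  obtain ⟨z, hz, hadj⟩ := hq i.val i.isLt hi0
  rw [List.mem_take_iff_getElem] at hz
  obtain ⟨j, hj, hjz⟩ := hz
  have hj1 : j < (i : ℕ) := lt_of_lt_of_le hj (min_le_left _ _)
  have hj2 : j < l.length := lt_trans hj1 i.isLt
  refine ⟨⟨j, hj2⟩, hj1, ?_⟩
  have : l.get ⟨j, hj2⟩ = z := hjz
  rw [this]
  exact hadj

lemma qprop_append {l₁ l₂ : List V} (h1 : QProp G l₁)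
    (h2 : ∀ w ∈ l₂, ∃ z ∈ l₁, G.Adj w z) : QProp G (l₁ ++ l₂) := by
  intro i hi hi0
  rcases lt_or_ge i l₁.length with h | h
  · obtain ⟨z, hz, hadj⟩ := h1 i h hi0
    refine ⟨z, ?_, ?_⟩
    · rw [List.take_append]
      exact List.mem_append_left _ hz
    · have : (l₁ ++ l₂).get ⟨i, hi⟩ = l₁.get ⟨i, h⟩ := List.getElem_append_left h
      rwa [this]
  · have hlen : i - l₁.length < l₂.length := by
      have := hi; simp only [List.length_append] at this; omega
    have hw : (l₁ ++ l₂).get ⟨i, hi⟩ ∈ l₂ := by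
      have heq : (l₁ ++ l₂).get ⟨i, hi⟩ = l₂[i - l₁.length]'hlen := List.getElem_append_right h
      rw [heq]
      exact List.getElem_mem _
    obtain ⟨z, hz, hadj⟩ := h2 _ hw
    refine ⟨z, ?_, hadj⟩
    rw [List.take_append, List.take_of_length_le h]
    exact List.mem_append_left _ hz

lemma qprop_nil : QProp G [] := fun i hi _ => absurd hi (by simp)

lemma qprop_singleton (w : V) : QProp G [w] := fun i hi h0 => by
  simp at hi; omega

lemma greedy_le_of_sorted [Fintype V] (c : V → ℕ) (hc1 : ∀ v, 1 ≤ c v)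
    (hproper : ∀ v w, G.Adj v w → c v ≠ c w) (l : List V) (hnd : l.Nodup)
    (hsort : ∀ i j (hi : i < l.length) (hj : j < l.length), i < j →
      c (l.get ⟨i, hi⟩) ≤ c (l.get ⟨j, hj⟩)) :
    ∀ i (hi : i < l.length), greedy G l (l.get ⟨i, hi⟩) ≤ c (l.get ⟨i, hi⟩) := by
  intro i
  induction i using Nat.strong_induction_on with
  | _ i IH =>
  intro hi
  rw [greedy, greedy_spec G _ hnd i hi]
  apply Nat.sInf_le
  refine ⟨hc1 _, ?_⟩
  intro z hz
  by_cases hzt : z ∈ l.take i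
  · rw [List.mem_take_iff_getElem] at hzt
    obtain ⟨j, hj, rfl⟩ := hzt
    have hj1 : j < i := lt_of_lt_of_le hj (min_le_left _ _)
    have hj2 : j < l.length := lt_trans hj1 hi
    have hstable : greedyFrom G (fun _ => 0) (l.take i) (l.get ⟨j, hj2⟩)
        = greedy G l (l.get ⟨j, hj2⟩) :=
      (greedyFrom_stable G _ hnd (get_mem_take hj2 hj1)).symm
    have hget : (l[j] : V) = l.get ⟨j, hj2⟩ := rfl
    rw [hget, hstable]
    have h3 := IH j hj1 hj2
    have h4 : c (l.get ⟨j, hj2⟩) ≤ c (l.get ⟨i, hi⟩) := hsort j i hj2 hi hj1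
    have h5 : c (l.get ⟨j, hj2⟩) ≠ c (l.get ⟨i, hi⟩) := by
      apply hproper
      rw [← hget]
      exact hz.symm
    omega
  · rw [greedyFrom_of_not_mem _ _ _ _ hzt]
    have := hc1 (l.get ⟨i, hi⟩)
    omega

lemma exists_sorted_order [Fintype V] (x : V) (k : ℕ) (hk : 0 < k)
    (hcol : G.Colorable k) :
    ∃ (c : V → ℕ) (rest : List V), (∀ v, 1 ≤ c v ∧ c v ≤ k) ∧ c x = 1 ∧
      (∀ v w, G.Adj v w → c v ≠ c w) ∧ (x :: rest).Nodup ∧ (∀ w, w ∈ x :: rest) ∧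
      (∀ i j (hi : i < (x :: rest).length) (hj : j < (x :: rest).length), i < j →
        c ((x :: rest).get ⟨i, hi⟩) ≤ c ((x :: rest).get ⟨j, hj⟩)) := by
  obtain ⟨C⟩ := hcol
  set c : V → ℕ := fun v => ((Equiv.swap (C x) ⟨0, hk⟩) (C v)).val + 1 with hc
  have hc1 : ∀ v, 1 ≤ c v ∧ c v ≤ k := by
    intro v
    constructor
    · simp [hc]
    · have := ((Equiv.swap (C x) ⟨0, hk⟩) (C v)).isLt
      simp only [hc]
      omega
  have hcx : c x = 1 := by simp [hc]
  have hcproper : ∀ v w, G.Adj v w → c v ≠ c w := by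
    intro v w hadj hc'
    simp only [hc, add_left_inj] at hc'
    exact C.valid hadj (Equiv.injective _ (Fin.ext hc'))
  set rest : List V := (Finset.univ.erase x).toList.mergeSort (fun a b => decide (c a ≤ c b))
    with hrest
  have hperm : rest.Perm (Finset.univ.erase x).toList := List.mergeSort_perm _ _
  have hnd : (x :: rest).Nodup := by
    refine List.nodup_cons.mpr ⟨?_, hperm.nodup_iff.mpr (Finset.nodup_toList _)⟩
    intro hmem
    have := hperm.mem_iff.mp hmem
    rw [Finset.mem_toList, Finset.mem_erase] at this
    exact this.1 rfl
  have hmem : ∀ w, w ∈ x :: rest := by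
    intro w
    by_cases hw : w = x
    · simp [hw]
    · refine List.mem_cons_of_mem _ ?_
      rw [hperm.mem_iff, Finset.mem_toList, Finset.mem_erase]
      exact ⟨hw, Finset.mem_univ w⟩
  have hsorted : List.Pairwise (fun a b => c a ≤ c b) rest := by
    have := List.pairwise_mergeSort (le := fun a b => decide (c a ≤ c b))
      (fun a b cc h1 h2 => by simp at h1 h2 ⊢; omega)
      (fun a b => by simp; omega) (Finset.univ.erase x).toList
    rw [← hrest] at this
    exact this.imp (fun h => by simpa using h)
  refine ⟨c, rest, hc1, hcx, hcproper, hnd, hmem, ?_⟩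
  have hpair : List.Pairwise (fun a b => c a ≤ c b) (x :: rest) := by
    refine List.pairwise_cons.mpr ⟨fun b _ => ?_, hsorted⟩
    rw [hcx]
    exact (hc1 b).1
  rw [List.pairwise_iff_get] at hpair
  intro i j hi hj hij
  exact hpair ⟨i, hi⟩ ⟨j, hj⟩ hij

end ConnOrderHelpers


section Forward
variable {V : Type*} [DecidableEq V] [Fintype V]

lemma inl_not_mem_glist {k : ℕ} {hk : 0 < k} {a b : V} :
    (Sum.inl b : V ⊕ (V × {t : GkVert k // t ≠ GkVert.u})) ∉ glist k hk a := by
  intro hmem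
  obtain ⟨t, ht, hemb⟩ := mem_glist.mp hmem
  rw [gadgetEmb_ne a t ht] at hemb
  exact nomatch hemb

lemma emb_not_mem_glist {k : ℕ} {hk : 0 < k} {a b : V} (hab : b ≠ a) {t : GkVert k}
    (ht : t ≠ GkVert.u) : gadgetEmb k b t ∉ glist k hk a := by
  intro hmem
  obtain ⟨s, hs, hemb⟩ := mem_glist.mp hmem
  rw [gadgetEmb_ne b t ht, gadgetEmb_ne a s hs] at hemb
  simp only [Sum.inr.injEq, Prod.mk.injEq] at hemb
  exact hab hemb.1

/-- The block of a vertex in the big list. -/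
def blk (k : ℕ) (hk : 0 < k) (a : V) : List (V ⊕ (V × {t : GkVert k // t ≠ GkVert.u})) :=
  Sum.inl a :: glist k hk a

lemma qprop_blk {k : ℕ} (hk3 : 3 ≤ k) {hk : 0 < k} (G : SimpleGraph V)
    (l₁ : List (V ⊕ (V × {t : GkVert k // t ≠ GkVert.u})))
    (hQ : QProp (Gstar G k) l₁) (a : V)
    (hpar : l₁ = [] ∨ ∃ z ∈ l₁, (Gstar G k).Adj (Sum.inl a) z) :
    QProp (Gstar G k) (l₁ ++ blk k hk a) := by
  have hk1 : (1 : ℕ) ≤ k - 1 := by omega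
  set L1 : List (V ⊕ (V × {t : GkVert k // t ≠ GkVert.u})) :=
    List.ofFn (fun i : Fin k => gadgetEmb k a (GkVert.U i)) with hL1
  set L3 : List (V ⊕ (V × {t : GkVert k // t ≠ GkVert.u})) :=
    List.ofFn (fun i : Fin (k-1) => gadgetEmb k a (GkVert.M (mIdx k i))) with hL3
  set L5 : List (V ⊕ (V × {t : GkVert k // t ≠ GkVert.u})) :=
    List.ofFn (fun i : Fin k => gadgetEmb k a (GkVert.W i)) with hL5
  have hsplit : l₁ ++ blk k hk a =
      (((((l₁ ++ [Sum.inl a]) ++ L1) ++ [gadgetEmb k a GkVert.u']) ++ L3 ++ [gadgetEmb k a GkVert.v])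
        ++ L5) ++ [gadgetEmb k a GkVert.v', gadgetEmb k a (GkVert.M ⟨0, hk⟩)] := by
    simp only [blk, glist, gklist, List.map_append, List.map_ofFn, List.append_assoc,
      List.map_cons, List.map_nil, Function.comp_def, List.cons_append, List.nil_append,
      List.singleton_append]
    rfl
  rw [hsplit]
  have hQ1 : QProp (Gstar G k) (l₁ ++ [Sum.inl a]) := by
    rcases hpar with rfl | ⟨z, hz, hadj⟩
    · simpa using qprop_singleton (Gstar G k) (Sum.inl a)
    · exact qprop_append _ hQ (fun w hw => by
        simp only [List.mem_singleton] at hw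
        exact ⟨z, hz, hw ▸ hadj⟩)
  have hQ2 : QProp (Gstar G k) ((l₁ ++ [Sum.inl a]) ++ L1) := by
    refine qprop_append _ hQ1 (fun w hw => ?_)
    obtain ⟨i, hi⟩ := by simpa [hL1, List.mem_ofFn, eq_comm] using hw
    refine ⟨Sum.inl a, by simp, ?_⟩
    rw [hi, ← gadgetEmb_u a]
    exact adj_emb (by simp) (by simp [gkAdj])
  have hQ3 : QProp (Gstar G k) (((l₁ ++ [Sum.inl a]) ++ L1) ++ [gadgetEmb k a GkVert.u']) := by
    refine qprop_append _ hQ2 (fun w hw => ?_)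
    simp only [List.mem_singleton] at hw
    refine ⟨gadgetEmb k a (GkVert.U ⟨0, hk⟩), by simp [hL1, List.mem_ofFn], ?_⟩
    rw [hw]
    exact adj_emb (by simp) (by simp [gkAdj])
  have hQ4 : QProp (Gstar G k)
      ((((l₁ ++ [Sum.inl a]) ++ L1) ++ [gadgetEmb k a GkVert.u']) ++ L3) := by
    refine qprop_append _ hQ3 (fun w hw => ?_)
    obtain ⟨i, hi⟩ := by simpa [hL3, List.mem_ofFn, eq_comm] using hw
    refine ⟨Sum.inl a, by simp, ?_⟩
    rw [hi, ← gadgetEmb_u a]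
    exact adj_emb (by simp) (by simp [gkAdj, mIdx])
  have hQ5 : QProp (Gstar G k)
      ((((l₁ ++ [Sum.inl a]) ++ L1) ++ [gadgetEmb k a GkVert.u']) ++ L3
        ++ [gadgetEmb k a GkVert.v]) := by
    refine qprop_append _ hQ4 (fun w hw => ?_)
    simp only [List.mem_singleton] at hw
    refine ⟨gadgetEmb k a (GkVert.M (mIdx k ⟨0, by omega⟩)), by simp [hL3, List.mem_ofFn], ?_⟩
    rw [hw]
    exact adj_emb (by simp) (by simp [gkAdj, mIdx])
  have hQ6 : QProp (Gstar G k)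
      (((((l₁ ++ [Sum.inl a]) ++ L1) ++ [gadgetEmb k a GkVert.u']) ++ L3
        ++ [gadgetEmb k a GkVert.v]) ++ L5) := by
    refine qprop_append _ hQ5 (fun w hw => ?_)
    obtain ⟨i, hi⟩ := by simpa [hL5, List.mem_ofFn, eq_comm] using hw
    refine ⟨gadgetEmb k a GkVert.v, by simp, ?_⟩
    rw [hi]
    exact adj_emb (by simp) (by simp [gkAdj])
  refine qprop_append _ hQ6 (fun w hw => ?_)
  simp only [List.mem_cons, List.mem_singleton, List.not_mem_nil, or_false] at hw
  rcases hw with rfl | rfl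
  · refine ⟨gadgetEmb k a (GkVert.W ⟨0, hk⟩), by simp [hL5, List.mem_ofFn], ?_⟩
    exact adj_emb (by simp) (by simp [gkAdj])
  · refine ⟨gadgetEmb k a GkVert.u', by simp, ?_⟩
    exact adj_emb (by simp) (by simp [gkAdj])

end Forward


section ForwardMain
variable {V : Type*} [DecidableEq V] [Fintype V]

lemma forward_lemma (G : SimpleGraph V) (k : ℕ) (hk3 : 3 ≤ k)
    (x : V) (hx : ∀ y, y ≠ x → G.Adj x y) (hcol : G.Colorable k) :
    ∃ f, IsCGC (Gstar G k) f ∧ ∀ w, f w ≤ k + 1 := by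
  have hk : 0 < k := by omega
  obtain ⟨c, rest, hc1, hcx, hcp, hnd, hmem, hsort⟩ := exists_sorted_order G x k hk hcol
  set vl : List V := x :: rest with hvl
  have hgG : ∀ b, 1 ≤ greedy G vl b ∧ greedy G vl b ≤ k := by
    intro b
    obtain ⟨i, hib⟩ := List.get_of_mem (hmem b)
    rw [← hib]
    have hpos := greedy_pos G (fun _ => 0) hnd i.val i.isLt
    have hle := greedy_le_of_sorted G c (fun v => (hc1 v).1) (fun v w h => hcp v w h)
      vl hnd hsort i.val i.isLt
    simp only [Fin.eta] at hpos hle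
    exact ⟨hpos, le_trans hle (hc1 _).2⟩
  have inv : ∀ n, n ≤ vl.length →
      (∀ b, greedyFrom (Gstar G k) (fun _ => 0) ((vl.take n).flatMap (blk k hk)) (Sum.inl b)
          = greedyFrom G (fun _ => 0) (vl.take n) b) ∧
      (∀ b ∈ vl.take n, ∀ t, ∀ ht : t ≠ GkVert.u,
          greedyFrom (Gstar G k) (fun _ => 0) ((vl.take n).flatMap (blk k hk)) (gadgetEmb k b t)
            = gval k (greedy G vl b) t) ∧
      (∀ b, b ∉ vl.take n → ∀ t, ∀ ht : t ≠ GkVert.u,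
          greedyFrom (Gstar G k) (fun _ => 0) ((vl.take n).flatMap (blk k hk))
            (gadgetEmb k b t) = 0) := by
    intro n
    induction n with
    | zero => exact fun _ => ⟨fun b => rfl, by simp, fun b _ t ht => rfl⟩
    | succ n IH =>
      intro hn1
      have hn : n < vl.length := by omega
      obtain ⟨IHa, IHb, IHc⟩ := IH (by omega)
      set a := vl.get ⟨n, hn⟩ with ha
      have htake : vl.take (n+1) = vl.take n ++ [a] := by
        rw [ha]
        rw [← List.concat_eq_append]
        exact (List.take_concat_get hn).symm
      have hanotin : a ∉ vl.take n := by
        intro hmem'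
        rw [List.mem_take_iff_getElem] at hmem'
        obtain ⟨j, hj, hja⟩ := hmem'
        have hj1 : j < n := lt_of_lt_of_le hj (min_le_left _ _)
        have heq : vl.get ⟨j, by omega⟩ = vl.get ⟨n, hn⟩ := hja
        have := (List.Nodup.get_inj_iff hnd).mp heq
        simp only [Fin.mk.injEq] at this
        omega
      have hBLs : (vl.take (n+1)).flatMap (blk k hk)
          = (vl.take n).flatMap (blk k hk) ++ (Sum.inl a :: glist k hk a) := by
        rw [htake, List.flatMap_append]
        simp [blk]
      set g := greedyFrom (Gstar G k) (fun _ => 0) ((vl.take n).flatMap (blk k hk)) with hg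
      set gFn := greedyFrom G (fun _ => 0) (vl.take n) with hgFn
      set Ψ := greedyStep (Gstar G k) g (Sum.inl a) with hΨ
      set α := greedyFrom G (fun _ => 0) (vl.take (n+1)) a with hα
      have hgnew : greedyFrom (Gstar G k) (fun _ => 0) ((vl.take (n+1)).flatMap (blk k hk))
          = greedyFrom (Gstar G k) Ψ (glist k hk a) := by
        rw [hBLs, greedyFrom_append, greedyFrom_cons, ← hg, ← hΨ]
      have hΨa : Ψ (Sum.inl a) = α := by
        rw [hΨ, greedyStep_apply_self, hα, htake, greedyFrom_append, greedyFrom_cons,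
          greedyFrom_nil, greedyStep_apply_self, ← hgFn]
        congr 1
        ext m
        simp only [Set.mem_setOf_eq]
        constructor
        · rintro ⟨h0, hall⟩
          refine ⟨h0, fun y hy => ?_⟩
          have := hall (Sum.inl y) (gstar_adj_inl.mpr (Or.inl ⟨y, hy, rfl⟩))
          rwa [IHa y] at this
        · rintro ⟨h0, hall⟩
          refine ⟨h0, fun z hz => ?_⟩
          rcases gstar_adj_inl.mp hz with ⟨b, hab, rfl⟩ | ⟨s, hs, rfl⟩
          · rw [IHa b]; exact hall b hab
          · have hsu : s ≠ GkVert.u := by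
              rcases gkAdj_u_iff.mp hs with ⟨j, rfl⟩ | ⟨i, hi0, rfl⟩ <;> simp
            rw [IHc a hanotin s hsu]
            omega
      have hαg : α = greedy G vl a := by
        rw [hα, greedy, ha]
        exact (greedyFrom_stable G _ hnd (get_mem_take hn (Nat.lt_succ_self n))).symm
      have hα1 : 1 ≤ α := by rw [hαg]; exact (hgG a).1
      have hαk : α ≤ k := by rw [hαg]; exact (hgG a).2
      have hΨ0 : ∀ t, ∀ ht : t ≠ GkVert.u, Ψ (gadgetEmb k a t) = 0 := by
        intro t ht
        rw [hΨ, greedyStep_apply_ne _ _ _ _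
          (by rw [gadgetEmb_ne a t ht]; exact fun hh => nomatch hh)]
        exact IHc a hanotin t ht
      obtain ⟨hout, hval⟩ := gadget_lemma G k hk a α hα1 hαk Ψ hΨa hΨ0
      refine ⟨?_, ?_, ?_⟩
      · intro b
        rw [hgnew, hout _ inl_not_mem_glist]
        by_cases hb : b = a
        · subst hb; rw [hΨa, hα]
        · rw [hΨ, greedyStep_apply_ne _ _ _ _ (by simp [hb]), htake, greedyFrom_append,
            greedyFrom_cons, greedyFrom_nil, greedyStep_apply_ne _ _ _ _ hb, ← hgFn]
          exact IHa b
      · intro b hb t ht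
        rw [htake, List.mem_append, List.mem_singleton] at hb
        rcases hb with hbn | rfl
        · have hba : b ≠ a := fun hc => hanotin (hc ▸ hbn)
          rw [hgnew, hout _ (emb_not_mem_glist hba ht), hΨ, greedyStep_apply_ne _ _ _ _
            (by rw [gadgetEmb_ne b t ht]; exact fun hh => nomatch hh)]
          exact IHb b hbn t ht
        · rw [hgnew, hval t ht, hαg]
      · intro b hb t ht
        have hbn : b ∉ vl.take n := fun hc => hb (by rw [htake]; exact List.mem_append_left _ hc)
        have hba : b ≠ a := fun hc => hb (by rw [htake, hc]; exact List.mem_append_right _ (by simp))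
        rw [hgnew, hout _ (emb_not_mem_glist hba ht), hΨ, greedyStep_apply_ne _ _ _ _
          (by rw [gadgetEmb_ne b t ht]; exact fun hh => nomatch hh)]
        exact IHc b hbn t ht
  obtain ⟨Ia, Ib, Ic⟩ := inv vl.length le_rfl
  rw [List.take_length] at Ia Ib
  refine ⟨greedy (Gstar G k) (vl.flatMap (blk k hk)),
    ⟨vl.flatMap (blk k hk), ?_, rfl⟩, ?_⟩
  · apply isConnectedOrder_of
    · rw [List.nodup_flatMap]
      constructor
      · intro b _
        exact List.nodup_cons.mpr ⟨inl_not_mem_glist, glist_nodup hk b⟩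
      · refine hnd.imp ?_
        intro p q hpq z hzp hzq
        simp only [blk, List.mem_cons] at hzp hzq
        rcases hzp with rfl | hzp <;> rcases hzq with hzq | hzq
        · exact hpq (by simpa using hzq)
        · exact inl_not_mem_glist hzq
        · rw [hzq] at hzp; exact inl_not_mem_glist hzp
        · obtain ⟨t, ht, rfl⟩ := mem_glist.mp hzp
          obtain ⟨s, hs, heq⟩ := mem_glist.mp hzq
          rw [gadgetEmb_ne p t ht, gadgetEmb_ne q s hs] at heq
          simp only [Sum.inr.injEq, Prod.mk.injEq] at heq
          exact hpq heq.1
    · intro w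
      cases w with
      | inl b => exact List.mem_flatMap.mpr ⟨b, hmem b, by simp [blk]⟩
      | inr p =>
        obtain ⟨b, t, ht⟩ := p
        refine List.mem_flatMap.mpr ⟨b, hmem b, ?_⟩
        simp only [blk, List.mem_cons]
        right
        rw [show (Sum.inr (b, ⟨t, ht⟩) : V ⊕ (V × {t : GkVert k // t ≠ GkVert.u}))
          = gadgetEmb k b t from (gadgetEmb_ne b t ht).symm]
        exact mem_glist.mpr ⟨t, ht, rfl⟩
    · have key : ∀ rs : List V, (∀ b ∈ rs, b ≠ x) →
          QProp (Gstar G k) ((x :: rs).flatMap (blk k hk)) := by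
        intro rs
        induction rs using List.reverseRecOn with
        | nil =>
          intro _
          have h0 : (x :: ([] : List V)).flatMap (blk k hk) = [] ++ blk k hk x := by simp
          rw [h0]
          exact qprop_blk hk3 G [] (qprop_nil _) x (Or.inl rfl)
        | append_singleton rs b IH =>
          intro hne
          have h1 : (x :: (rs ++ [b])).flatMap (blk k hk)
              = (x :: rs).flatMap (blk k hk) ++ blk k hk b := by
            rw [show x :: (rs ++ [b]) = (x :: rs) ++ [b] from rfl, List.flatMap_append]
            simp
          rw [h1]
          refine qprop_blk hk3 G _ (IH (fun b' hb' => hne b' (by simp [hb']))) b (Or.inr ?_)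
          refine ⟨Sum.inl x, List.mem_flatMap.mpr ⟨x, by simp, by simp [blk]⟩, ?_⟩
          exact gstar_adj_inl.mpr (Or.inl ⟨x, (hx b (hne b (by simp))).symm, rfl⟩)
      exact key rest (fun b hb hc => (List.nodup_cons.mp hnd).1 (hc ▸ hb))
  · intro w
    cases w with
    | inl b =>
      rw [greedy, Ia b]
      have := (hgG b).2
      rw [greedy] at this
      omega
    | inr p =>
      obtain ⟨b, t, ht⟩ := p
      rw [show (Sum.inr (b, ⟨t, ht⟩) : V ⊕ (V × {t : GkVert k // t ≠ GkVert.u}))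
        = gadgetEmb k b t from (gadgetEmb_ne b t ht).symm, greedy, Ib b (hmem b) t ht]
      exact gval_le (hgG b).2 t

end ForwardMain


section Backward
variable {V' : Type*} [DecidableEq V'] [Fintype V']

lemma cgc_pos' {G' : SimpleGraph V'} {f : V' → ℕ} (hf : IsCGC G' f) (w : V') : 1 ≤ f w := by
  obtain ⟨l, ⟨hnd, hmem, _⟩, rfl⟩ := hf
  obtain ⟨i, hi⟩ := List.get_of_mem (hmem w)
  rw [← hi]
  have := greedy_pos G' (fun _ => 0) hnd i.val i.isLt
  simpa [greedy, Fin.eta, Nat.pos_iff_ne_zero, Nat.one_le_iff_ne_zero] using this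

lemma cgc_proper' {G' : SimpleGraph V'} {f : V' → ℕ} (hf : IsCGC G' f) {w z : V'}
    (h : G'.Adj w z) : f w ≠ f z := by
  obtain ⟨l, ⟨hnd, hmem, _⟩, rfl⟩ := hf
  exact greedy_proper G' hnd hmem h

lemma justify_card (G' : SimpleGraph V') {l : List V'} (hnd : l.Nodup)
    (i : ℕ) (hi : i < l.length) (N : Finset V')
    (hN : ∀ z, G'.Adj (l.get ⟨i, hi⟩) z → z ∈ l.take i → z ∈ N) :
    greedy G' l (l.get ⟨i, hi⟩) ≤ N.card + 1 := by
  by_contra hcon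
  push_neg at hcon
  have hsub : Finset.Icc 1 (N.card + 1) ⊆
      N.image (greedyFrom G' (fun _ => 0) (l.take i)) := by
    intro n hn
    rw [Finset.mem_Icc] at hn
    obtain ⟨z, hadj, hstate⟩ := greedy_justify G' (fun _ => 0) hnd i hi n (by omega)
      (by rw [← greedy]; omega)
    have hztake : z ∈ l.take i := by
      by_contra hz
      rw [greedyFrom_of_not_mem _ _ _ _ hz] at hstate
      omega
    exact Finset.mem_image.mpr ⟨z, hN z hadj hztake, hstate⟩
  have h1 := Finset.card_le_card hsub
  have h2 := Finset.card_image_le (s := N) (f := greedyFrom G' (fun _ => 0) (l.take i))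
  rw [Nat.card_Icc] at h1
  omega

end Backward

section BackwardRegion
variable {V : Type*} [DecidableEq V] [Fintype V]

lemma region_lemma (G : SimpleGraph V) (k : ℕ) (a : V)
    {l : List (V ⊕ (V × {t : GkVert k // t ≠ GkVert.u}))}
    (hconn : ∀ i : Fin l.length, 0 < (i : ℕ) →
      ∃ j : Fin l.length, (j : ℕ) < (i : ℕ) ∧ (Gstar G k).Adj (l.get i) (l.get j))
    (h0len : 0 < l.length)
    (h0 : ∃ t, ∃ _ : t ≠ GkVert.u, l.get ⟨0, h0len⟩ = gadgetEmb k a t) :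
    ∀ p (hp : p < l.length), (∀ q (hq : q < l.length), q ≤ p → l.get ⟨q, hq⟩ ≠ Sum.inl a) →
      ∃ t, ∃ _ : t ≠ GkVert.u, l.get ⟨p, hp⟩ = gadgetEmb k a t := by
  intro p
  induction p using Nat.strong_induction_on with
  | _ p IH =>
  intro hp hne
  rcases Nat.eq_zero_or_pos p with rfl | hppos
  · exact h0
  · obtain ⟨j, hj, hadj⟩ := hconn ⟨p, hp⟩ hppos
    have hjp : (j : ℕ) < p := by simpa using hj
    obtain ⟨t, ht, hjt⟩ := IH j.val hjp j.isLt (fun q hq hqj => hne q hq (by omega))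
    rw [Fin.eta] at hjt
    have hadj' := hadj.symm
    rw [hjt, adj_emb_iff ht] at hadj'
    obtain ⟨s, hs, hps⟩ := hadj'
    have hsu : s ≠ GkVert.u := by
      intro hsu
      rw [hsu, gadgetEmb_u] at hps
      exact hne p hp le_rfl hps
    exact ⟨s, hsu, hps⟩

end BackwardRegion


section BackwardMain
variable {V : Type*} [DecidableEq V] [Fintype V]

lemma backward_gadget (G : SimpleGraph V) (k : ℕ) (hk3 : 3 ≤ k) (a : V)
    (f : V ⊕ (V × {t : GkVert k // t ≠ GkVert.u}) → ℕ)
    (hf : IsCGC (Gstar G k) f) (hle : ∀ w, f w ≤ k + 1)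
    (hfa : f (Sum.inl a) = k + 1) : False := by
  have hk : 0 < k := by omega
  obtain ⟨l, hco, rfl⟩ := hf
  have hf' : IsCGC (Gstar G k) (greedy (Gstar G k) l) := ⟨l, hco, rfl⟩
  obtain ⟨hnd, hmem, hconn⟩ := hco
  set f := greedy (Gstar G k) l with hfdef
  have hpos : ∀ w, 1 ≤ f w := cgc_pos' hf'
  have hprop : ∀ {w z}, (Gstar G k).Adj w z → f w ≠ f z := fun h => cgc_proper' hf' h
  have hadjUa : ∀ i : Fin k, (Gstar G k).Adj (gadgetEmb k a (GkVert.U i)) (Sum.inl a) := by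
    intro i; rw [← gadgetEmb_u a]; exact adj_emb (by simp) (by simp [gkAdj])
  have hadjMa : ∀ i : Fin k, i.val ≠ 0 →
      (Gstar G k).Adj (gadgetEmb k a (GkVert.M i)) (Sum.inl a) := by
    intro i hi; rw [← gadgetEmb_u a]; exact adj_emb (by simp) (by simp [gkAdj, hi])
  -- U-colors are exactly {1, …, k}
  set UC := (Finset.univ : Finset (Fin k)).image
    (fun i => f (gadgetEmb k a (GkVert.U i))) with hUCdef
  have hUC : UC = Finset.Icc 1 k := by
    have hsub : UC ⊆ Finset.Icc 1 k := by
      intro n hn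
      obtain ⟨i, _, rfl⟩ := Finset.mem_image.mp hn
      have h1 := hpos (gadgetEmb k a (GkVert.U i))
      have h2 := hle (gadgetEmb k a (GkVert.U i))
      have h3 : f (gadgetEmb k a (GkVert.U i)) ≠ k + 1 := by
        rw [← hfa]; exact hprop (hadjUa i)
      rw [Finset.mem_Icc]; omega
    have hinjU : Set.InjOn (fun i => f (gadgetEmb k a (GkVert.U i)))
        ↑(Finset.univ : Finset (Fin k)) := by
      intro i _ j _ hij
      by_contra hne
      exact hprop (adj_emb (by simp) (by simpa [gkAdj] using hne)) hij
    have hcard : UC.card = k := by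
      rw [hUCdef, Finset.card_image_of_injOn hinjU, Finset.card_univ, Fintype.card_fin]
    exact Finset.eq_of_subset_of_card_le hsub (by rw [hcard, Nat.card_Icc]; omega)
  have hfu' : f (gadgetEmb k a GkVert.u') = k + 1 := by
    have hnotin : f (gadgetEmb k a GkVert.u') ∉ UC := by
      intro hmem'
      obtain ⟨i, _, hi⟩ := Finset.mem_image.mp hmem'
      exact hprop (adj_emb (by simp) (by simp [gkAdj])) hi.symm
    rw [hUC, Finset.mem_Icc] at hnotin
    have h1 := hpos (gadgetEmb k a GkVert.u')
    have h2 := hle (gadgetEmb k a GkVert.u')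
    omega
  set γ := f (gadgetEmb k a (GkVert.M ⟨0, hk⟩)) with hγdef
  have hγ : 1 ≤ γ ∧ γ ≤ k := by
    have h1 := hpos (gadgetEmb k a (GkVert.M ⟨0, hk⟩))
    have h2 := hle (gadgetEmb k a (GkVert.M ⟨0, hk⟩))
    have h3 : f (gadgetEmb k a GkVert.u') ≠ γ :=
      hprop (adj_emb (by simp) (by simp [gkAdj]))
    rw [hfu'] at h3
    constructor
    · omega
    · rcases Nat.lt_or_ge γ (k+1) with h | h
      · omega
      · exact absurd (show k + 1 = γ by omega) h3
  set Mf := (Finset.univ.filter (fun i : Fin k => i.val ≠ 0)).image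
    (fun i => gadgetEmb k a (GkVert.M i)) with hMfdef
  have hfiltercard : (Finset.univ.filter (fun i : Fin k => i.val ≠ 0)).card = k - 1 := by
    have heq : Finset.univ.filter (fun i : Fin k => i.val ≠ 0)
        = Finset.univ.erase ⟨0, hk⟩ := by
      ext i; simp [Fin.ext_iff]
    rw [heq, Finset.card_erase_of_mem (Finset.mem_univ _), Finset.card_univ, Fintype.card_fin]
  have hMfcard : Mf.card = k - 1 := by
    rw [hMfdef, Finset.card_image_of_injOn
      (fun i _ j _ h => by simpa using gadgetEmb_inj_right h), hfiltercard]
  set MC := (Finset.univ.filter (fun i : Fin k => i.val ≠ 0)).image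
    (fun i => f (gadgetEmb k a (GkVert.M i))) with hMCdef
  have hMC : MC = (Finset.Icc 1 k).erase γ := by
    have hsub : MC ⊆ (Finset.Icc 1 k).erase γ := by
      intro n hn
      obtain ⟨i, hifil, rfl⟩ := Finset.mem_image.mp hn
      rw [Finset.mem_filter] at hifil
      have h1 := hpos (gadgetEmb k a (GkVert.M i))
      have h2 := hle (gadgetEmb k a (GkVert.M i))
      have h3 : f (gadgetEmb k a (GkVert.M i)) ≠ k + 1 := by
        rw [← hfa]; exact hprop (hadjMa i hifil.2)
      have h4 : f (gadgetEmb k a (GkVert.M i)) ≠ γ := by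
        rw [hγdef]
        refine hprop (adj_emb (by simp) ?_)
        simp only [gkAdj]
        intro hc
        exact hifil.2 (by rw [hc])
      rw [Finset.mem_erase, Finset.mem_Icc]
      exact ⟨h4, by omega⟩
    have hinj : Set.InjOn (fun i => f (gadgetEmb k a (GkVert.M i)))
        ↑(Finset.univ.filter (fun i : Fin k => i.val ≠ 0)) := by
      intro i _ j _ hij
      by_contra hne
      exact hprop (adj_emb (by simp) (by simpa [gkAdj] using hne)) hij
    have hcard : MC.card = k - 1 := by
      rw [hMCdef, Finset.card_image_of_injOn hinj, hfiltercard]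
    apply Finset.eq_of_subset_of_card_le hsub
    rw [Finset.card_erase_of_mem (by rw [Finset.mem_Icc]; omega), Nat.card_Icc, hcard]
    omega
  have hv : f (gadgetEmb k a GkVert.v) = γ ∨ f (gadgetEmb k a GkVert.v) = k + 1 := by
    have hnotin : f (gadgetEmb k a GkVert.v) ∉ MC := by
      intro hmem'
      obtain ⟨i, hifil, hi⟩ := Finset.mem_image.mp hmem'
      rw [Finset.mem_filter] at hifil
      exact hprop (adj_emb (by simp) (by simp [gkAdj, hifil.2])) hi.symm
    rw [hMC] at hnotin
    by_cases hγc : f (gadgetEmb k a GkVert.v) = γ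
    · exact Or.inl hγc
    · right
      have hni : f (gadgetEmb k a GkVert.v) ∉ Finset.Icc 1 k :=
        fun hmem2 => hnotin (Finset.mem_erase.mpr ⟨hγc, hmem2⟩)
      rw [Finset.mem_Icc] at hni
      have h1 := hpos (gadgetEmb k a GkVert.v)
      have h2 := hle (gadgetEmb k a GkVert.v)
      omega
  set WC := (Finset.univ : Finset (Fin k)).image
    (fun i => f (gadgetEmb k a (GkVert.W i))) with hWCdef
  have hWCsub : WC ⊆ Finset.Icc 1 (k + 1) := by
    intro n hn
    obtain ⟨i, _, rfl⟩ := Finset.mem_image.mp hn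
    have h1 := hpos (gadgetEmb k a (GkVert.W i))
    have h2 := hle (gadgetEmb k a (GkVert.W i))
    rw [Finset.mem_Icc]; omega
  have hinjW : Set.InjOn (fun i => f (gadgetEmb k a (GkVert.W i)))
      ↑(Finset.univ : Finset (Fin k)) := by
    intro i _ j _ hij
    by_contra hne
    exact hprop (adj_emb (by simp) (by simpa [gkAdj] using hne)) hij
  have hWCcard : WC.card = k := by
    rw [hWCdef, Finset.card_image_of_injOn hinjW, Finset.card_univ, Fintype.card_fin]
  have hvW : f (gadgetEmb k a GkVert.v) ∉ WC := by
    intro hmem'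
    obtain ⟨i, _, hi⟩ := Finset.mem_image.mp hmem'
    exact hprop (adj_emb (by simp) (by simp [gkAdj])) hi.symm
  have hv'W : f (gadgetEmb k a GkVert.v') ∉ WC := by
    intro hmem'
    obtain ⟨i, _, hi⟩ := Finset.mem_image.mp hmem'
    exact hprop (adj_emb (by simp) (by simp [gkAdj])) hi.symm
  have hdiffcard : ((Finset.Icc 1 (k + 1)) \ WC).card = 1 := by
    rw [Finset.card_sdiff_of_subset hWCsub, Nat.card_Icc, hWCcard]
    omega
  have hvv' : f (gadgetEmb k a GkVert.v) = f (gadgetEmb k a GkVert.v') := by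
    have h1 : f (gadgetEmb k a GkVert.v) ∈ (Finset.Icc 1 (k + 1)) \ WC := by
      rw [Finset.mem_sdiff, Finset.mem_Icc]
      exact ⟨⟨hpos _, hle _⟩, hvW⟩
    have h2 : f (gadgetEmb k a GkVert.v') ∈ (Finset.Icc 1 (k + 1)) \ WC := by
      rw [Finset.mem_sdiff, Finset.mem_Icc]
      exact ⟨⟨hpos _, hle _⟩, hv'W⟩
    exact Finset.card_le_one.mp (le_of_eq hdiffcard) _ h1 _ h2
  have hv'γ : f (gadgetEmb k a GkVert.v') ≠ γ := by
    rw [hγdef]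
    exact hprop (adj_emb (by simp) (by simp [gkAdj]))
  have hvK : f (gadgetEmb k a GkVert.v) = k + 1 := by
    rcases hv with h | h
    · exact absurd (hvv' ▸ h) hv'γ
    · exact h
  have hv'K : f (gadgetEmb k a GkVert.v') = k + 1 := hvv' ▸ hvK
  -- index infrastructure
  set idx : (V ⊕ (V × {t : GkVert k // t ≠ GkVert.u})) → ℕ :=
    fun z => @List.idxOf _ instBEqOfDecidableEq z l with hidxdef
  have hidxlt : ∀ z, idx z < l.length := by
    intro z; simp only [hidxdef]; exact (@List.idxOf_lt_length_iff _ instBEqOfDecidableEq inferInstance _ _).mpr (hmem z)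
  have hidxget : ∀ z, l.get ⟨idx z, hidxlt z⟩ = z := by
    intro z; simp only [hidxdef]; exact @List.idxOf_get _ instBEqOfDecidableEq inferInstance _ _ _
  have hgetidx : ∀ p (hp : p < l.length), idx (l.get ⟨p, hp⟩) = p := by
    intro p hp
    have h1 : l.get ⟨idx (l.get ⟨p, hp⟩), hidxlt _⟩ = l.get ⟨p, hp⟩ := hidxget _
    have h2 := (List.Nodup.get_inj_iff hnd).mp h1
    simpa using h2
  have hidxtake : ∀ z p, z ∈ l.take p → idx z < p := by
    intro z p hz
    rw [List.mem_take_iff_getElem] at hz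
    obtain ⟨q, hq, hzq⟩ := hz
    have hq1 : q < p := lt_of_lt_of_le hq (min_le_left _ _)
    have hq2 : q < l.length := lt_of_lt_of_le hq (min_le_right _ _)
    have heq : l.get ⟨q, hq2⟩ = z := hzq
    rw [← heq, hgetidx q hq2]
    exact hq1
  have hjust : ∀ (w : V ⊕ (V × {t : GkVert k // t ≠ GkVert.u})) (N : Finset _),
      (∀ z, (Gstar G k).Adj w z → z ∈ l.take (idx w) → z ∈ N) → f w ≤ N.card + 1 := by
    intro w N hN
    have := justify_card (Gstar G k) hnd (idx w) (hidxlt w) N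
      (fun z hz ht => hN z (by rwa [hidxget w] at hz) ht)
    rwa [hidxget w] at this
  -- the set W ∪ {v, v'} and its earliest element
  set WSf : Finset (V ⊕ (V × {t : GkVert k // t ≠ GkVert.u})) :=
    insert (gadgetEmb k a GkVert.v) (insert (gadgetEmb k a GkVert.v')
      ((Finset.univ : Finset (Fin k)).image (fun i => gadgetEmb k a (GkVert.W i)))) with hWSdef
  have hWSne : (WSf.image idx).Nonempty :=
    ⟨idx (gadgetEmb k a GkVert.v), Finset.mem_image_of_mem _ (by simp [hWSdef])⟩
  obtain ⟨z0, hz0mem, hz0⟩ := Finset.mem_image.mp (Finset.min'_mem _ hWSne)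
  set m0 := (WSf.image idx).min' hWSne with hm0def
  have hminW : ∀ z ∈ WSf, m0 ≤ idx z :=
    fun z hz => Finset.min'_le _ _ (Finset.mem_image_of_mem _ hz)
  have hz0mem' : z0 = gadgetEmb k a GkVert.v ∨ z0 = gadgetEmb k a GkVert.v' ∨
      ∃ i, z0 = gadgetEmb k a (GkVert.W i) := by
    simp only [hWSdef, Finset.mem_insert, Finset.mem_image, Finset.mem_univ, true_and] at hz0mem
    rcases hz0mem with h | h | ⟨i, hi⟩
    · exact Or.inl h
    · exact Or.inr (Or.inl h)
    · exact Or.inr (Or.inr ⟨i, hi.symm⟩)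
  rcases hz0mem' with rfl | rfl | ⟨i, rfl⟩
  · -- the earliest is v : contradiction via pigeonhole
    have hB := hjust (gadgetEmb k a GkVert.v) Mf ?_
    · rw [hvK, hMfcard] at hB; omega
    · intro z hz ht
      rw [adj_emb_iff (by simp)] at hz
      obtain ⟨s, hs, rfl⟩ := hz
      rcases gkAdj_v_iff.mp hs with ⟨j, rfl⟩ | ⟨ii, hi0, rfl⟩
      · exfalso
        have h1 := hminW (gadgetEmb k a (GkVert.W j)) (by simp [hWSdef])
        have h2 := hidxtake _ _ ht
        omega
      · exact Finset.mem_image.mpr ⟨ii, by simp [hi0], rfl⟩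
  · -- the earliest is v' : contradiction, at most one earlier neighbour
    have hB := hjust (gadgetEmb k a GkVert.v') {gadgetEmb k a (GkVert.M ⟨0, hk⟩)} ?_
    · rw [hv'K, Finset.card_singleton] at hB; omega
    · intro z hz ht
      rw [adj_emb_iff (by simp)] at hz
      obtain ⟨s, hs, rfl⟩ := hz
      rcases gkAdj_v'_iff.mp hs with ⟨j, rfl⟩ | ⟨ii, hi0, rfl⟩
      · exfalso
        have h1 := hminW (gadgetEmb k a (GkVert.W j)) (by simp [hWSdef])
        have h2 := hidxtake _ _ ht
        omega
      · have : ii = ⟨0, hk⟩ := Fin.ext hi0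
        rw [this]
        exact Finset.mem_singleton_self _
  · -- the earliest is some W-vertex
    rcases Nat.eq_zero_or_pos m0 with hm00 | hm0pos
    · -- it is the very first vertex of the ordering
      have h0len : 0 < l.length := by
        have := hidxlt (gadgetEmb k a (GkVert.W i)); omega
      have hidx0 : idx (gadgetEmb k a (GkVert.W i)) = 0 := by omega
      have hget0 : l.get ⟨0, h0len⟩ = gadgetEmb k a (GkVert.W i) := by
        rw [show (⟨0, h0len⟩ : Fin l.length) = ⟨idx (gadgetEmb k a (GkVert.W i)), hidxlt _⟩
          from Fin.ext (by simp; omega)]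
        exact hidxget _
      set USf : Finset (V ⊕ (V × {t : GkVert k // t ≠ GkVert.u})) :=
        insert (Sum.inl a) (insert (gadgetEmb k a GkVert.u')
          ((Finset.univ : Finset (Fin k)).image (fun i => gadgetEmb k a (GkVert.U i))))
        with hUSdef
      have hUSne : (USf.image idx).Nonempty :=
        ⟨idx (Sum.inl a), Finset.mem_image_of_mem _ (by simp [hUSdef])⟩
      obtain ⟨e, hemem, he⟩ := Finset.mem_image.mp (Finset.min'_mem _ hUSne)
      set mU := (USf.image idx).min' hUSne with hmUdef
      have hminU : ∀ z ∈ USf, mU ≤ idx z :=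
        fun z hz => Finset.min'_le _ _ (Finset.mem_image_of_mem _ hz)
      have hemem' : e = Sum.inl a ∨ e = gadgetEmb k a GkVert.u' ∨
          ∃ j, e = gadgetEmb k a (GkVert.U j) := by
        simp only [hUSdef, Finset.mem_insert, Finset.mem_image, Finset.mem_univ,
          true_and] at hemem
        rcases hemem with h | h | ⟨j, hj⟩
        · exact Or.inl h
        · exact Or.inr (Or.inl h)
        · exact Or.inr (Or.inr ⟨j, hj.symm⟩)
      rcases hemem' with rfl | rfl | ⟨j, rfl⟩
      · have hreg := region_lemma G k a hconn h0len ⟨GkVert.W i, by simp, hget0⟩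
        have hB := hjust (Sum.inl a) Mf ?_
        · rw [hfa, hMfcard] at hB; omega
        · intro z hz ht
          obtain ⟨q, hq, hzq⟩ := List.mem_take_iff_getElem.mp ht
          have hq1 : q < idx (Sum.inl a) := lt_of_lt_of_le hq (min_le_left _ _)
          have hq2 : q < l.length := lt_of_lt_of_le hq (min_le_right _ _)
          have hzq' : l.get ⟨q, hq2⟩ = z := hzq
          have hidxz : idx z = q := by rw [← hzq', hgetidx q hq2]
          have hnotinl : ∀ q' (hq' : q' < l.length), q' ≤ q → l.get ⟨q', hq'⟩ ≠ Sum.inl a := by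
            intro q' hq' hle' hcq
            have hq'i := hgetidx q' hq'
            rw [hcq] at hq'i
            omega
          obtain ⟨t, ht', hzt⟩ := hreg q hq2 hnotinl
          rw [hzq'] at hzt
          rcases gstar_adj_inl.mp hz with ⟨b, hab, hzb⟩ | ⟨s, hs, hzs⟩
          · exfalso
            rw [hzt, gadgetEmb_ne a t ht'] at hzb
            exact nomatch hzb
          · rcases gkAdj_u_iff.mp hs with ⟨j', rfl⟩ | ⟨ii, hi0, rfl⟩
            · exfalso
              have h1 := hminU (gadgetEmb k a (GkVert.U j')) (by simp [hUSdef])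
              rw [← hzs] at h1
              omega
            · rw [hzs]
              exact Finset.mem_image.mpr ⟨ii, by simp [hi0], rfl⟩
      · have hB := hjust (gadgetEmb k a GkVert.u') {gadgetEmb k a (GkVert.M ⟨0, hk⟩)} ?_
        · rw [hfu', Finset.card_singleton] at hB; omega
        · intro z hz ht
          rw [adj_emb_iff (by simp)] at hz
          obtain ⟨s, hs, rfl⟩ := hz
          rcases gkAdj_u'_iff.mp hs with ⟨j, rfl⟩ | ⟨ii, hi0, rfl⟩
          · exfalso
            have h1 := hminU (gadgetEmb k a (GkVert.U j)) (by simp [hUSdef])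
            have h2 := hidxtake _ _ ht
            omega
          · have hii : ii = ⟨0, hk⟩ := Fin.ext hi0
            rw [hii]
            exact Finset.mem_singleton_self _
      · rcases Nat.eq_zero_or_pos (idx (gadgetEmb k a (GkVert.U j))) with hUj0 | hUjpos
        · have hgg : l.get ⟨0, h0len⟩ = gadgetEmb k a (GkVert.U j) := by
            rw [show (⟨0, h0len⟩ : Fin l.length)
              = ⟨idx (gadgetEmb k a (GkVert.U j)), hidxlt _⟩ from Fin.ext (by simp; omega)]
            exact hidxget _
          rw [hget0] at hgg
          exact absurd (gadgetEmb_inj_right hgg) (by simp)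
        · obtain ⟨jj, hjj, hadj⟩ := hconn ⟨idx (gadgetEmb k a (GkVert.U j)), hidxlt _⟩ hUjpos
          have hjjlt : (jj : ℕ) < idx (gadgetEmb k a (GkVert.U j)) := by simpa using hjj
          rw [hidxget _, adj_emb_iff (by simp)] at hadj
          obtain ⟨s, hs, hjs⟩ := hadj
          have hjUS : l.get jj ∈ USf := by
            rcases gkAdj_U_iff.mp hs with ⟨j', _, rfl⟩ | rfl | rfl
            · rw [hjs]; simp [hUSdef]
            · rw [hjs, gadgetEmb_u]; simp [hUSdef]
            · rw [hjs]; simp [hUSdef]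
          have h1 := hminU _ hjUS
          rw [show l.get jj = l.get ⟨(jj : ℕ), jj.isLt⟩ from by simp,
            hgetidx (jj : ℕ) jj.isLt] at h1
          omega
    · -- the earliest W-element has an earlier neighbour, necessarily in WS : contradiction
      have hm0lt : m0 < l.length := hz0 ▸ hidxlt _
      obtain ⟨j, hj, hadj⟩ := hconn ⟨m0, hm0lt⟩ hm0pos
      have hjlt : (j : ℕ) < m0 := by simpa using hj
      have hgetm0 : l.get ⟨m0, hm0lt⟩ = gadgetEmb k a (GkVert.W i) := by
        rw [show (⟨m0, hm0lt⟩ : Fin l.length)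
          = ⟨idx (gadgetEmb k a (GkVert.W i)), hidxlt _⟩ from Fin.ext (by simp; omega)]
        exact hidxget _
      rw [hgetm0, adj_emb_iff (by simp)] at hadj
      obtain ⟨s, hs, hjs⟩ := hadj
      have hjWS : l.get j ∈ WSf := by
        rcases gkAdj_W_iff.mp hs with ⟨j', _, rfl⟩ | rfl | rfl
        · rw [hjs]; simp [hWSdef]
        · rw [hjs]; simp [hWSdef]
        · rw [hjs]; simp [hWSdef]
      have := hminW _ hjWS
      rw [show l.get j = l.get ⟨(j : ℕ), j.isLt⟩ from by simp, hgetidx (j : ℕ) j.isLt] at this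
      omega

end BackwardMain


section LowerBound
variable {V : Type*} [DecidableEq V] [Fintype V]

lemma no_small_cgc (G : SimpleGraph V) (k m : ℕ) (hk : 0 < k) (hm : m ≤ k) (a : V)
    (f : V ⊕ (V × {t : GkVert k // t ≠ GkVert.u}) → ℕ)
    (hf : IsCGC (Gstar G k) f) (hle : ∀ w, f w ≤ m) : False := by
  have hpos := cgc_pos' hf
  have hprop : ∀ {w z}, (Gstar G k).Adj w z → f w ≠ f z := fun h => cgc_proper' hf h
  set S := insert (Sum.inl a)
    ((Finset.univ : Finset (Fin k)).image (fun i => gadgetEmb k a (GkVert.U i))) with hS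
  have hnotmem : (Sum.inl a : V ⊕ (V × {t : GkVert k // t ≠ GkVert.u}))
      ∉ (Finset.univ : Finset (Fin k)).image (fun i => gadgetEmb k a (GkVert.U i)) := by
    intro hmem'
    obtain ⟨i, _, hi⟩ := Finset.mem_image.mp hmem'
    rw [gadgetEmb_ne a _ (by simp)] at hi
    exact nomatch hi
  have hScard : S.card = k + 1 := by
    rw [hS, Finset.card_insert_of_notMem hnotmem,
      Finset.card_image_of_injOn (fun i _ j _ h => by simpa using gadgetEmb_inj_right h),
      Finset.card_univ, Fintype.card_fin]
  have hmaps : ∀ z ∈ S, f z ∈ Finset.Icc 1 m := fun z _ => Finset.mem_Icc.mpr ⟨hpos z, hle z⟩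
  have hinj : Set.InjOn f ↑S := by
    intro z1 h1 z2 h2 hf12
    by_contra hne
    have hmem1 : z1 = Sum.inl a ∨ ∃ i, z1 = gadgetEmb k a (GkVert.U i) := by
      have h1' : z1 ∈ S := h1
      rw [hS, Finset.mem_insert] at h1'
      rcases h1' with h | h
      · exact Or.inl h
      · obtain ⟨i, _, hi⟩ := Finset.mem_image.mp h
        exact Or.inr ⟨i, hi.symm⟩
    have hmem2 : z2 = Sum.inl a ∨ ∃ i, z2 = gadgetEmb k a (GkVert.U i) := by
      have h2' : z2 ∈ S := h2
      rw [hS, Finset.mem_insert] at h2'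
      rcases h2' with h | h
      · exact Or.inl h
      · obtain ⟨i, _, hi⟩ := Finset.mem_image.mp h
        exact Or.inr ⟨i, hi.symm⟩
    have hadj : (Gstar G k).Adj z1 z2 := by
      rcases hmem1 with rfl | ⟨i, rfl⟩ <;> rcases hmem2 with rfl | ⟨j, rfl⟩
      · exact absurd rfl hne
      · exact gstar_adj_inl.mpr (Or.inr ⟨GkVert.U j, by simp [gkAdj], by rw [gadgetEmb_ne a _ (by simp)]⟩)
      · exact (gstar_adj_inl.mpr (Or.inr ⟨GkVert.U i, by simp [gkAdj], by rw [gadgetEmb_ne a _ (by simp)]⟩)).symm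
      · refine adj_emb (by simp) ?_
        have hij : i ≠ j := fun hc => hne (by rw [hc])
        simpa [gkAdj] using hij
    exact hprop hadj hf12
  have hcle := Finset.card_le_card_of_injOn f hmaps hinj
  rw [hScard, Nat.card_Icc] at hcle
  omega

end LowerBound


theorem statement5 {V : Type*} [Fintype V] [DecidableEq V]
    (k : ℕ) (hk : 3 ≤ k) (G : SimpleGraph V) (hG : G.Connected)
    (x : V) (hx : ∀ y : V, y ≠ x → G.Adj x y)
    (hcol : G.chromaticNumber ≤ (k + 1 : ℕ)) :
    G.chromaticNumber ≤ (k : ℕ) ↔ connChrom (Gstar G k) = k + 1 := by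
  have hk0 : 0 < k := by omega
  constructor
  · intro hchrom
    have hcol' : G.Colorable k := chromaticNumber_le_iff_colorable.mp hchrom
    obtain ⟨f, hf, hfle⟩ := forward_lemma G k hk x hx hcol'
    have hmemset : (k + 1) ∈ {m | ∃ f, IsCGC (Gstar G k) f ∧ ∀ w, f w ≤ m} := ⟨f, hf, hfle⟩
    have hlb : ∀ m ∈ {m | ∃ f, IsCGC (Gstar G k) f ∧ ∀ w, f w ≤ m}, k + 1 ≤ m := by
      rintro m ⟨f', hf', hle'⟩
      by_contra hcon
      exact no_small_cgc G k m hk0 (by omega) x f' hf' hle'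
    unfold connChrom
    exact le_antisymm (Nat.sInf_le hmemset) (le_csInf ⟨_, hmemset⟩ hlb)
  · intro hconn'
    unfold connChrom at hconn'
    have hne : {m | ∃ f, IsCGC (Gstar G k) f ∧ ∀ w, f w ≤ m}.Nonempty := by
      by_contra hemp
      rw [Set.not_nonempty_iff_eq_empty] at hemp
      rw [hemp, Nat.sInf_empty] at hconn'
      omega
    have hmem2 : ∃ f, IsCGC (Gstar G k) f ∧ ∀ w, f w ≤ k + 1 := by
      have h := Nat.sInf_mem hne
      rwa [hconn'] at h
    obtain ⟨f, hf, hle⟩ := hmem2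
    clear hconn'
    have hsmall : ∀ a : V, f (Sum.inl a) ≤ k := by
      intro a
      by_contra hcon
      have heq : f (Sum.inl a) = k + 1 := by have := hle (Sum.inl a); omega
      exact backward_gadget G k hk a f hf hle heq
    have hcolor : G.Colorable k := by
      have hpos := cgc_pos' hf
      refine ⟨SimpleGraph.Coloring.mk (fun a => ⟨f (Sum.inl a) - 1, by
        have h1 := hpos (Sum.inl a); have h2 := hsmall a; omega⟩) ?_⟩
      intro v w hadj hc
      simp only [Fin.mk.injEq] at hc
      have hfne : f (Sum.inl v) ≠ f (Sum.inl w) :=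
        cgc_proper' hf (gstar_adj_inl.mpr (Or.inl ⟨w, hadj, rfl⟩))
      have h1 := hpos (Sum.inl v)
      have h2 := hpos (Sum.inl w)
      exact hfne (by omega)
    exact chromaticNumber_le_iff_colorable.mpr hcolor
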